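/- arXiv:0708.2684 — 5 statements merged into one kernel-verified Lean document; each statement's English description precedes it below -/
import Mathlib

section
/- Let a > b > 0 and c = √(a² − b²). For every t ∈ ℝ set ζ(t) = a cos t + i b sin t (a point of the ellipse x²/a² + y²/b² = 1) and s(t) = b cos t + i a sin t. Then s(t)² = ζ(t)² − c² and conj(ζ(t)) = ((a² + b²) ζ(t) − 2ab s(t)) / c². -/
open Complex

/-- The Schwarz function of the ellipse with semi-axes `a > b > 0`: along the
parametrization `ζ(t) = a cos t + i b sin t`, the function `s(t) = b cos t + i a sin t`
satisfies `s(t)² = ζ(t)² - c²` and `conj ζ(t) = ((a² + b²) ζ(t) - 2ab s(t)) / c²`. -/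
theorem schwarz_function_ellipse
    (a b : ℝ) (hb : 0 < b) (hab : b < a)
    (c : ℝ) (hc : c = Real.sqrt (a ^ 2 - b ^ 2)) (t : ℝ)
    (ζ s : ℂ)
    (hζ : ζ = (a * Real.cos t : ℝ) + (b * Real.sin t : ℝ) * Complex.I)
    (hs : s = (b * Real.cos t : ℝ) + (a * Real.sin t : ℝ) * Complex.I) :
    s ^ 2 = ζ ^ 2 - (c : ℂ) ^ 2 ∧
    starRingEnd ℂ ζ = (((a ^ 2 + b ^ 2 : ℝ) : ℂ) * ζ - 2 * (a : ℂ) * (b : ℂ) * s)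
      / ((c : ℂ) ^ 2) := by
  have hc2 : c ^ 2 = a ^ 2 - b ^ 2 := by
    rw [hc]; exact Real.sq_sqrt (by nlinarith)
  have hc2C : (c : ℂ) ^ 2 = (a : ℂ) ^ 2 - (b : ℂ) ^ 2 := by
    exact_mod_cast congrArg (Complex.ofReal) hc2
  have hcne : (c : ℂ) ^ 2 ≠ 0 := by
    rw [hc2C]
    intro h
    have : (a : ℂ) ^ 2 = (b : ℂ) ^ 2 := by linear_combination h
    have : (a : ℝ) ^ 2 = b ^ 2 := by exact_mod_cast this
    nlinarith
  have hpyth : (Real.sin t : ℂ) ^ 2 + (Real.cos t : ℂ) ^ 2 = 1 := by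
    exact_mod_cast Real.sin_sq_add_cos_sq t
  constructor
  · rw [hζ, hs, hc2C]
    simp only [Complex.ofReal_mul]
    linear_combination ((b:ℂ)^2 - (a:ℂ)^2) * hpyth
      + ((Real.sin t : ℂ))^2 * ((a:ℂ)^2 - (b:ℂ)^2) * Complex.I_sq
  · rw [eq_div_iff hcne, hζ, hc2C, hs]
    simp only [map_add, map_mul, Complex.conj_ofReal, Complex.conj_I, Complex.ofReal_mul,
      Complex.ofReal_add, Complex.ofReal_pow]
    ring
end

section
/- Let μ be a finite nonnegative Borel measure on ℂ with compact support K, and let w ∈ ℂ. Let Γ ⊂ ℂ be a compact connected set disjoint from K such that K is contained in a bounded connected component of ℂ \ Γ and every point of Γ belongs to the closure of the unbounded connected component of ℂ \ Γ. Suppose that every z ∈ Γ satisfies conj(z) − conj(w) = ∫ 1/(z − ζ) dμ(ζ). Then Γ ⊆ { z ∈ ℂ : |z − w|² = μ(ℂ) }; in particular Γ lies on a circle centered at w. -/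
open Complex MeasureTheory Metric

/-- Einstein rings without shear are circles: if a compactly supported mass
distribution produces a whole image curve `Γ` surrounding the mass, then `Γ` lies on
a circle centered at the source `w`, of radius squared equal to the total mass. -/
theorem einstein_ring_is_circle
    (μ : Measure ℂ) (hfinμ : IsFiniteMeasure μ)
    (K : Set ℂ) (hKcpt : IsCompact K) (hKsupp : μ Kᶜ = 0) (w : ℂ)
    (Γ : Set ℂ) (hΓcpt : IsCompact Γ) (hΓconn : IsConnected Γ)
    (hdisj : Disjoint Γ K)
    (hKin : ∃ x : ℂ, x ∉ Γ ∧ K ⊆ connectedComponentIn Γᶜ x ∧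
      Bornology.IsBounded (connectedComponentIn Γᶜ x))
    (hΓout : ∃ y : ℂ, y ∉ Γ ∧ ¬ Bornology.IsBounded (connectedComponentIn Γᶜ y) ∧
      Γ ⊆ closure (connectedComponentIn Γᶜ y))
    (hlens : ∀ z ∈ Γ, starRingEnd ℂ z - starRingEnd ℂ w = ∫ ζ, (z - ζ)⁻¹ ∂μ) :
    Γ ⊆ {z : ℂ | ‖z - w‖ ^ 2 = (μ Set.univ).toReal} := by
  classical
  haveI := hfinμ
  obtain ⟨x, hxΓ, hKx, hxbdd⟩ := hKin
  obtain ⟨y, hyΓ, hybdd, hΓcl⟩ := hΓout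
  set m : ℝ := (μ Set.univ).toReal with hm
  have hm0 : 0 ≤ m := ENNReal.toReal_nonneg
  set g : ℂ → ℂ := fun z => ∫ ζ, (ζ - w) / (z - ζ) ∂μ with hgdef
  have hKcl : IsClosed K := hKcpt.isClosed
  have haeK : ∀ᵐ ζ ∂μ, ζ ∈ K := by
    rw [MeasureTheory.ae_iff]
    exact hKsupp
  -- a bound on ‖ζ - w‖ over K
  obtain ⟨r₁, hr₁⟩ := hKcpt.isBounded.subset_closedBall w
  set r : ℝ := max r₁ 0 with hrdef
  have hr0 : 0 ≤ r := le_max_right _ _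
  have hrK : ∀ ζ ∈ K, ‖ζ - w‖ ≤ r := by
    intro ζ hζ
    have := hr₁ hζ
    rw [Metric.mem_closedBall, dist_eq_norm] at this
    exact this.trans (le_max_left _ _)
  -- a bound on ‖ζ‖ over K
  obtain ⟨R₁, hR₁⟩ := hKcpt.isBounded.subset_closedBall 0
  set R₀ : ℝ := max R₁ 0 with hR₀def
  have hR₀0 : 0 ≤ R₀ := le_max_right _ _
  have hR₀K : ∀ ζ ∈ K, ‖ζ‖ ≤ R₀ := by
    intro ζ hζ
    have := hR₁ hζ
    rw [Metric.mem_closedBall, dist_zero_right] at this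
    exact this.trans (le_max_left _ _)
  -- measurability
  have hmeas : ∀ z : ℂ, AEStronglyMeasurable (fun ζ : ℂ => (ζ - w) / (z - ζ)) μ := by
    intro z
    exact (((measurable_id.sub_const w)).div (measurable_const.sub measurable_id)).aestronglyMeasurable
  have hmeas' : ∀ z : ℂ, AEStronglyMeasurable (fun ζ : ℂ => (z - ζ)⁻¹) μ := by
    intro z
    exact ((measurable_const.sub measurable_id).inv).aestronglyMeasurable
  -- integrability
  have hint : ∀ (z : ℂ) (δ : ℝ), 0 < δ → (∀ ζ ∈ K, δ ≤ ‖z - ζ‖) →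
      Integrable (fun ζ : ℂ => (ζ - w) / (z - ζ)) μ := by
    intro z δ hδ hk
    refine Integrable.mono' (integrable_const (r / δ)) (hmeas z) ?_
    filter_upwards [haeK] with ζ hζ
    rw [norm_div]
    exact div_le_div₀ hr0 (hrK ζ hζ) hδ (hk ζ hζ)
  have hint' : ∀ (z : ℂ) (δ : ℝ), 0 < δ → (∀ ζ ∈ K, δ ≤ ‖z - ζ‖) →
      Integrable (fun ζ : ℂ => (z - ζ)⁻¹) μ := by
    intro z δ hδ hk
    refine Integrable.mono' (integrable_const δ⁻¹) (hmeas' z) ?_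
    filter_upwards [haeK] with ζ hζ
    rw [norm_inv]
    exact inv_anti₀ hδ (hk ζ hζ)
  -- norm bound on g
  have hgbound : ∀ (z : ℂ) (δ : ℝ), 0 < δ → (∀ ζ ∈ K, δ ≤ ‖z - ζ‖) →
      ‖g z‖ ≤ r / δ * m := by
    intro z δ hδ hk
    refine norm_integral_le_of_norm_le_const ?_
    filter_upwards [haeK] with ζ hζ
    rw [norm_div]
    exact div_le_div₀ hr0 (hrK ζ hζ) hδ (hk ζ hζ)
  -- a positive distance from points outside K to K
  have hsep : ∀ z ∉ K, ∃ δ > 0, ∀ ζ ∈ K, δ ≤ ‖z - ζ‖ := by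
    intro z hz
    obtain ⟨δ, hδ, hsub⟩ := Metric.isOpen_iff.mp hKcl.isOpen_compl z hz
    refine ⟨δ / 2, by positivity, fun ζ hζ => ?_⟩
    by_contra h
    push_neg at h
    have : ζ ∈ ball z δ := by
      rw [Metric.mem_ball, dist_comm, dist_eq_norm]
      linarith
    exact hsub this hζ
  -- complex differentiability of g off K
  have hgdiff : ∀ z ∉ K, DifferentiableAt ℂ g z := by
    intro z hz
    obtain ⟨δ, hδ, hk⟩ := hsep z hz
    have hb1 : ∀ᵐ ζ ∂μ, ∀ z' ∈ ball z (δ / 2),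
        ‖(fun z' (ζ : ℂ) => (ζ - w) * (-1 / (z' - ζ) ^ 2)) z' ζ‖ ≤ r * (1 / (δ / 2) ^ 2) := by
      filter_upwards [haeK] with ζ hζ
      intro z' hz'
      have hz'ζ : δ / 2 ≤ ‖z' - ζ‖ := by
        have h1 := hk ζ hζ
        have h2 : ‖z' - z‖ < δ / 2 := by
          rw [Metric.mem_ball, dist_eq_norm] at hz'; exact hz'
        have h3 : ‖z - ζ‖ ≤ ‖z - z'‖ + ‖z' - ζ‖ := norm_sub_le_norm_sub_add_norm_sub _ _ _
        rw [norm_sub_rev z z'] at h3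
        linarith
      rw [norm_mul, norm_div, norm_neg, norm_one, norm_pow]
      apply mul_le_mul (hrK ζ hζ) ?_ (by positivity) hr0
      apply div_le_div₀ (by norm_num) le_rfl (by positivity)
      exact pow_le_pow_left₀ (by positivity) hz'ζ 2
    have hb2 : ∀ᵐ ζ ∂μ, ∀ z' ∈ ball z (δ / 2),
        HasDerivAt (fun z'' => (fun z'' (ζ : ℂ) => (ζ - w) / (z'' - ζ)) z'' ζ)
          ((fun z' (ζ : ℂ) => (ζ - w) * (-1 / (z' - ζ) ^ 2)) z' ζ) z' := by
      filter_upwards [haeK] with ζ hζ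
      intro z' hz'
      have hz'ζ : z' - ζ ≠ 0 := by
        have h1 := hk ζ hζ
        have h2 : ‖z' - z‖ < δ / 2 := by
          rw [Metric.mem_ball, dist_eq_norm] at hz'; exact hz'
        have h3 : ‖z - ζ‖ ≤ ‖z - z'‖ + ‖z' - ζ‖ := norm_sub_le_norm_sub_add_norm_sub _ _ _
        rw [norm_sub_rev z z'] at h3
        intro h
        rw [h, norm_zero] at h3
        linarith
      have h1 : HasDerivAt (fun t : ℂ => t - ζ) 1 z' := (hasDerivAt_id z').sub_const ζ
      have h2 : HasDerivAt (fun t : ℂ => (t - ζ)⁻¹) (-1 / (z' - ζ) ^ 2) z' := by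
        simpa [Pi.inv_def] using h1.inv hz'ζ
      have h3 := h2.const_mul (ζ - w)
      simpa [div_eq_mul_inv, mul_comm, mul_left_comm, mul_assoc] using h3
    have hm1 : AEStronglyMeasurable ((fun z' (ζ : ℂ) => (ζ - w) * (-1 / (z' - ζ) ^ 2)) z) μ := by
      apply Measurable.aestronglyMeasurable
      exact (measurable_id.sub_const w).mul
        (measurable_const.div ((measurable_const.sub measurable_id).pow_const 2))
    have key := hasDerivAt_integral_of_dominated_loc_of_deriv_le (μ := μ)
      (F := fun z' (ζ : ℂ) => (ζ - w) / (z' - ζ))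
      (F' := fun z' (ζ : ℂ) => (ζ - w) * (-1 / (z' - ζ) ^ 2))
      (x₀ := z) (bound := fun _ => r * (1 / (δ / 2) ^ 2)) (s := ball z (δ / 2)) (ball_mem_nhds z (by positivity))
      (Filter.Eventually.of_forall fun z' => hmeas z') (hint z δ hδ hk)
      hm1 hb1 (integrable_const _) hb2
    exact key.2.differentiableAt
  have hgcont : ContinuousOn g Kᶜ := fun z hz =>
    (hgdiff z hz).continuousAt.continuousWithinAt
  -- decay of g at infinity
  have hdecay : ∀ ε > 0, ∃ R : ℝ, R₀ < R ∧ ∀ z : ℂ, R ≤ ‖z‖ → ‖g z‖ ≤ ε := by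
    intro ε hε
    refine ⟨R₀ + (r * m / ε + 1), by have h : (0:ℝ) < r * m / ε + 1 := by positivity
                                     linarith, ?_⟩
    intro z hz
    have hk : ∀ ζ ∈ K, r * m / ε + 1 ≤ ‖z - ζ‖ := by
      intro ζ hζ
      have h1 := hR₀K ζ hζ
      have h2 : ‖z‖ - ‖ζ‖ ≤ ‖z - ζ‖ := norm_sub_norm_le z ζ
      linarith
    have := hgbound z (r * m / ε + 1) (by positivity) hk
    refine this.trans ?_
    rw [div_mul_eq_mul_div, div_le_iff₀ (by positivity)]
    have : ε * (r * m / ε) = r * m := by field_simp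
    nlinarith [this]
  -- points of Γ are not in K
  have hΓK : ∀ z ∈ Γ, z ∉ K := fun z hz hzK => Set.disjoint_left.mp hdisj hz hzK
  -- on Γ, g is real and equals |z-w|² - m
  have hΓreal : ∀ z ∈ Γ, g z = ((‖z - w‖ ^ 2 - m : ℝ) : ℂ) := by
    intro z hz
    obtain ⟨δ, hδ, hk⟩ := hsep z (hΓK z hz)
    have hinv : Integrable (fun ζ : ℂ => (z - ζ)⁻¹) μ := hint' z δ hδ hk
    have h1 : Integrable (fun ζ : ℂ => (z - w) * (z - ζ)⁻¹) μ := hinv.const_mul _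
    have h2 : g z = ∫ ζ, ((z - w) * (z - ζ)⁻¹ - 1) ∂μ := by
      refine integral_congr_ae ?_
      filter_upwards [haeK] with ζ hζ
      have hne : z - ζ ≠ 0 := by
        intro h
        have := hk ζ hζ
        rw [h, norm_zero] at this
        linarith
      field_simp
      ring
    rw [h2, integral_sub h1 (integrable_const 1), integral_const_mul, ← hlens z hz,
      integral_const]
    have h3 : (z - w) * ((starRingEnd ℂ) z - (starRingEnd ℂ) w)
        = ((‖z - w‖ ^ 2 : ℝ) : ℂ) := by
      rw [← map_sub, Complex.mul_conj, Complex.normSq_eq_norm_sq]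
    rw [h3]
    push_cast
    simp [hm]
    rfl
  have hImΓ : ∀ z ∈ Γ, (g z).im = 0 := by
    intro z hz
    rw [hΓreal z hz]
    simp [← Complex.ofReal_pow]
  -- the unbounded component Ω
  have hΓop : IsOpen Γᶜ := hΓcpt.isClosed.isOpen_compl
  set Ω : Set ℂ := connectedComponentIn Γᶜ y with hΩdef
  have hΩopen : IsOpen Ω := hΓop.connectedComponentIn
  have hyΩ : y ∈ Ω := mem_connectedComponentIn hyΓ
  have hΩconn : IsPreconnected Ω := isPreconnected_connectedComponentIn
  have hclΩ : closure Ω ⊆ Ω ∪ Γ := by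
    intro p hp
    by_cases hpΓ : p ∈ Γ
    · exact Or.inr hpΓ
    · left
      have hN : IsOpen (connectedComponentIn Γᶜ p) := hΓop.connectedComponentIn
      have hpN : p ∈ connectedComponentIn Γᶜ p := mem_connectedComponentIn hpΓ
      obtain ⟨q, hqN, hqΩ⟩ := mem_closure_iff.mp hp _ hN hpN
      have e1 : connectedComponentIn Γᶜ p = connectedComponentIn Γᶜ q :=
        connectedComponentIn_eq hqN
      have e2 : Ω = connectedComponentIn Γᶜ q := connectedComponentIn_eq hqΩ
      rw [e1, ← e2] at hpN
      exact hpN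
  have hΩK : ∀ p ∈ Ω, p ∉ K := by
    intro p hpΩ hpK
    have h1 : Ω = connectedComponentIn Γᶜ p := connectedComponentIn_eq hpΩ
    have h2 : connectedComponentIn Γᶜ x = connectedComponentIn Γᶜ p :=
      connectedComponentIn_eq (hKx hpK)
    apply hybdd
    rw [h1, ← h2]
    exact hxbdd
  have hclKc : closure Ω ⊆ Kᶜ := by
    intro p hp
    rcases hclΩ hp with h | h
    · exact hΩK p h
    · exact hΓK p h
  -- Γ is bounded
  obtain ⟨RΓ₁, hRΓ₁⟩ := hΓcpt.isBounded.subset_closedBall 0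
  set RΓ : ℝ := max RΓ₁ 0 with hRΓdef
  have hRΓΓ : ∀ z ∈ Γ, ‖z‖ ≤ RΓ := by
    intro z hz
    have := hRΓ₁ hz
    rw [Metric.mem_closedBall, dist_zero_right] at this
    exact this.trans (le_max_left _ _)
  -- maximum principle: Im g = 0 on Ω
  have hImΩ : ∀ z ∈ Ω, (g z).im = 0 := by
    intro z₀ hz₀
    have hboth : ∀ ε > 0, |(g z₀).im| ≤ ε := by
      intro ε hε
      obtain ⟨R₁', hR₁gt, hR₁'⟩ := hdecay ε hε
      set R : ℝ := max R₁' (max RΓ ‖z₀‖) + 1 with hRdef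
      have hRpos : 0 < R := by
        have : (0:ℝ) ≤ max R₁' (max RΓ ‖z₀‖) :=
          le_trans (norm_nonneg z₀) ((le_max_right _ _).trans (le_max_right _ _))
        linarith
      have hRz₀ : ‖z₀‖ < R := by
        have : ‖z₀‖ ≤ max R₁' (max RΓ ‖z₀‖) := (le_max_right _ _).trans (le_max_right _ _)
        linarith
      have hRR₁ : R₁' ≤ R := by
        have : R₁' ≤ max R₁' (max RΓ ‖z₀‖) := le_max_left _ _
        linarith
      set U : Set ℂ := Ω ∩ ball 0 R with hUdef
      have hUb : Bornology.IsBounded U := (isBounded_ball).subset Set.inter_subset_right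
      have hclU : closure U ⊆ Kᶜ :=
        (closure_mono Set.inter_subset_left).trans hclKc
      have hz₀U : z₀ ∈ U := ⟨hz₀, mem_ball_zero_iff.mpr hRz₀⟩
      have hfr : ∀ p ∈ frontier U, (g p).im = 0 ∨ ‖g p‖ ≤ ε := by
        intro p hp
        rcases frontier_inter_subset Ω (ball 0 R) hp with ⟨h1, _⟩ | ⟨_, h2⟩
        · left
          rw [hΩopen.frontier_eq] at h1
          rcases hclΩ h1.1 with h | h
          · exact absurd h h1.2
          · exact hImΓ p h
        · right
          rw [frontier_ball 0 (ne_of_gt hRpos)] at h2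
          rw [mem_sphere_zero_iff_norm] at h2
          exact hR₁' p (by rw [h2]; exact hRR₁)
      have main : ∀ s : ℝ, s = 1 ∨ s = -1 → s * (g z₀).im ≤ ε := by
        intro s hs
        set f : ℂ → ℂ := fun z => Complex.exp (-((s : ℂ) * I * g z)) with hfdef
        have hnorm : ∀ p : ℂ, ‖f p‖ = Real.exp (s * (g p).im) := by
          intro p
          rw [hfdef]
          simp only [Complex.norm_exp]
          congr 1
          simp [Complex.mul_re, Complex.mul_im]
        have hfd : DiffContOnCl ℂ f U := by
          constructor
          · intro p hp
            exact ((((hgdiff p (hΩK p hp.1)).const_mul ((s:ℂ) * I)).neg).cexp).differentiableWithinAt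
          · exact ((((hgcont.mono hclU).const_smul ((s:ℂ) * I)).neg).cexp).congr
              (fun p hp => by simp [hfdef, smul_eq_mul])
        have hCb : ∀ p ∈ frontier U, ‖f p‖ ≤ Real.exp ε := by
          intro p hp
          rw [hnorm p]
          apply Real.exp_le_exp.mpr
          rcases hfr p hp with him | hgp
          · rw [him, mul_zero]; exact hε.le
          · calc s * (g p).im ≤ |s * (g p).im| := le_abs_self _
              _ = |(g p).im| := by rcases hs with h | h <;> simp [h, abs_mul]
              _ ≤ ‖g p‖ := by exact Complex.abs_im_le_norm _
              _ ≤ ε := hgp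
        have hle := Complex.norm_le_of_forall_mem_frontier_norm_le hUb hfd hCb
          (subset_closure hz₀U)
        rw [hnorm z₀] at hle
        exact Real.exp_le_exp.mp hle
      have h1 := main 1 (Or.inl rfl)
      have h2 := main (-1) (Or.inr rfl)
      rw [one_mul] at h1
      rw [neg_one_mul] at h2
      rw [abs_le]
      constructor <;> linarith
    have h0 : |(g z₀).im| ≤ 0 := by
      refine le_of_forall_pos_le_add ?_
      intro ε hε
      simpa using hboth ε hε
    have := abs_nonneg (g z₀).im
    have : |(g z₀).im| = 0 := le_antisymm h0 this
    exact abs_eq_zero.mp this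
  -- g has zero derivative on Ω
  have hderiv0 : ∀ p ∈ Ω, HasDerivAt g 0 p := by
    intro p hp
    have hdiffp : DifferentiableAt ℂ g p := hgdiff p (hΩK p hp)
    have hD : HasDerivAt g (deriv g p) p := hdiffp.hasDerivAt
    set d : ℂ := deriv g p with hddef
    suffices hd0 : d = 0 by rwa [hd0] at hD
    have hev : g =ᶠ[nhds p] (fun t => (starRingEnd ℂ) (g t)) := by
      filter_upwards [hΩopen.mem_nhds hp] with t ht
      rw [Complex.conj_eq_iff_im.mpr (hImΩ t ht)]
    have h1 : HasFDerivAt g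
        ((ContinuousLinearMap.smulRight (1 : ℂ →L[ℂ] ℂ) d).restrictScalars ℝ) p :=
      (hD.hasFDerivAt).restrictScalars ℝ
    have h2 : HasFDerivAt (fun t => (starRingEnd ℂ) (g t))
        ((Complex.conjCLE.toContinuousLinearMap).comp
          ((ContinuousLinearMap.smulRight (1 : ℂ →L[ℂ] ℂ) d).restrictScalars ℝ)) p :=
      (Complex.conjCLE.toContinuousLinearMap.hasFDerivAt).comp p h1
    have h3 : HasFDerivAt g
        ((Complex.conjCLE.toContinuousLinearMap).comp
          ((ContinuousLinearMap.smulRight (1 : ℂ →L[ℂ] ℂ) d).restrictScalars ℝ)) p :=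
      h2.congr_of_eventuallyEq hev
    have heq := h1.unique h3
    have e1 : d = (starRingEnd ℂ) d := by
      have := ContinuousLinearMap.ext_iff.mp heq 1
      simpa using this
    have e2 : I * d = (starRingEnd ℂ) (I * d) := by
      have := ContinuousLinearMap.ext_iff.mp heq I
      simpa [smul_eq_mul] using this
    rw [eq_comm, Complex.conj_eq_iff_im] at e1 e2
    rw [Complex.mul_im] at e2
    simp at e2
    exact Complex.ext (by simpa using e2) e1
  -- g is constant on Ω
  have hconst : ∀ z ∈ Ω, g z = g y := by
    have hloc : ∀ p ∈ Ω, ∃ ρ > 0, ball p ρ ⊆ Ω ∧ ∀ q ∈ ball p ρ, g q = g p := by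
      intro p hp
      obtain ⟨ρ, hρ, hball⟩ := Metric.isOpen_iff.mp hΩopen p hp
      refine ⟨ρ, hρ, hball, fun q hq => ?_⟩
      refine (convex_ball p ρ).is_const_of_fderivWithin_eq_zero (𝕜 := ℂ) (f := g)
        (fun t ht => (hgdiff t (hΩK t (hball ht))).differentiableWithinAt) ?_ hq
        (mem_ball_self hρ)
      intro t ht
      rw [fderivWithin_of_isOpen isOpen_ball ht]
      have := (hderiv0 t (hball ht)).hasFDerivAt
      rw [this.fderiv]
      ext v
      simp
    set u : Set ℂ := {z | z ∈ Ω ∧ g z = g y} with hudef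
    set v : Set ℂ := {z | z ∈ Ω ∧ g z ≠ g y} with hvdef
    have hu : IsOpen u := by
      rw [Metric.isOpen_iff]
      intro p hp
      obtain ⟨ρ, hρ, hball, hc⟩ := hloc p hp.1
      exact ⟨ρ, hρ, fun q hq => ⟨hball hq, (hc q hq).trans hp.2⟩⟩
    have hv : IsOpen v := by
      rw [Metric.isOpen_iff]
      intro p hp
      obtain ⟨ρ, hρ, hball, hc⟩ := hloc p hp.1
      exact ⟨ρ, hρ, fun q hq => ⟨hball hq, by rw [hc q hq]; exact hp.2⟩⟩
    have hsub : Ω ⊆ u ∪ v := by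
      intro z hz
      by_cases h : g z = g y
      · exact Or.inl ⟨hz, h⟩
      · exact Or.inr ⟨hz, h⟩
    have hdisj' : Disjoint u v := by
      rw [Set.disjoint_left]
      rintro z ⟨_, h1⟩ ⟨_, h2⟩
      exact h2 h1
    have := hΩconn.subset_left_of_subset_union hu hv hdisj' hsub ⟨y, hyΩ, hyΩ, rfl⟩
    exact fun z hz => (this hz).2
  -- the constant is zero
  have hgy0 : g y = 0 := by
    have hb : ∀ ε > 0, ‖g y‖ ≤ ε := by
      intro ε hε
      obtain ⟨R₁', _, hR₁'⟩ := hdecay ε hε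
      have : ∃ z ∈ Ω, R₁' ≤ ‖z‖ := by
        by_contra h
        push_neg at h
        apply hybdd
        refine (isBounded_ball (x := (0:ℂ)) (r := R₁')).subset ?_
        intro z hz
        rw [mem_ball_zero_iff]
        exact h z hz
      obtain ⟨z, hzΩ, hzn⟩ := this
      rw [← hconst z hzΩ]
      exact hR₁' z hzn
    have h0 : ‖g y‖ ≤ 0 := by
      refine le_of_forall_pos_le_add ?_
      intro ε hε
      simpa using hb ε hε
    exact norm_le_zero_iff.mp h0
  -- g vanishes on Γ
  have hΓ0 : ∀ z ∈ Γ, g z = 0 := by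
    intro z hz
    have hzcl : z ∈ closure Ω := hΓcl hz
    have hc : ContinuousWithinAt g Ω z :=
      ((hgdiff z (hΓK z hz)).continuousAt).continuousWithinAt
    haveI hne : (nhdsWithin z Ω).NeBot := mem_closure_iff_nhdsWithin_neBot.mp hzcl
    have ht1 : Filter.Tendsto g (nhdsWithin z Ω) (nhds (g z)) := hc
    have ht2 : Filter.Tendsto g (nhdsWithin z Ω) (nhds 0) := by
      refine Filter.Tendsto.congr' ?_ tendsto_const_nhds
      filter_upwards [self_mem_nhdsWithin] with t ht
      rw [hconst t ht, hgy0]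
    exact tendsto_nhds_unique ht1 ht2
  -- conclusion
  intro z hz
  have h1 := hΓreal z hz
  rw [hΓ0 z hz] at h1
  have h2 : (‖z - w‖ ^ 2 - m : ℝ) = 0 := by exact_mod_cast h1.symm
  simp only [Set.mem_setOf_eq, ← hm]
  linarith
end

section
/- Let μ be a finite nonnegative Borel measure on ℂ with compact support K, let γ ∈ ℝ with γ ≠ 0, and let w ∈ ℂ. Let U ⊂ ℂ be a bounded connected open set containing K whose frontier Γ is homeomorphic to the unit circle, is disjoint from K, and is such that ℂ \ closure(U) is connected. Suppose every z ∈ Γ satisfies conj(z) − ∫ 1/(z − ζ) dμ(ζ) − γ z = conj(w). Then Γ is an ellipse: there is an invertible ℝ-affine map T : ℂ → ℂ with Γ = T '' { z : |z| = 1 }. -/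
open Complex MeasureTheory Metric Set Filter Bornology Topology

noncomputable section

namespace EinsteinAux






lemma sphere_diff_singleton_preconnected (p : ℂ) (hp : p ∈ sphere (0:ℂ) 1) :
    IsPreconnected (sphere (0:ℂ) 1 \ {p}) := by
  have hpabs : ‖p‖ = 1 := by
    simpa using mem_sphere_zero_iff_norm.mp hp
  have hpne : p ≠ 0 := by
    intro h; rw [h] at hpabs; simp at hpabs
  have himg : sphere (0:ℂ) 1 \ {p}
      = (fun θ : ℝ => p * Complex.exp (θ * Complex.I)) '' Ioo 0 (2*Real.pi) := by
    apply Subset.antisymm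
    · rintro z ⟨hz, hzp⟩
      have hzabs : ‖z‖ = 1 := by
        simpa using mem_sphere_zero_iff_norm.mp hz
      have hzne : z ≠ p := by simpa using hzp
      set u : ℂ := z * p⁻¹ with hu
      have huabs : ‖u‖ = 1 := by
        simp [hu, map_mul, hzabs, hpabs]
      have huexp : Complex.exp (u.arg * Complex.I) = u := by
        conv_rhs => rw [← Complex.norm_mul_exp_arg_mul_I u]
        rw [huabs]; simp
      have hune : u ≠ 1 := by
        intro h
        apply hzne
        have := congrArg (· * p) h
        simpa [hu, mul_assoc, inv_mul_cancel₀ hpne] using this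
      have hargne : u.arg ≠ 0 := by
        intro h
        apply hune
        rw [← huexp, h]; simp
      have hpu : p * u = z := by rw [hu]; field_simp
      rcases lt_or_gt_of_ne hargne with hneg | hpos
      · refine ⟨u.arg + 2*Real.pi, ⟨by linarith [Complex.neg_pi_lt_arg u, Real.pi_pos], by linarith⟩, ?_⟩
        show p * Complex.exp ((↑(u.arg + 2*Real.pi)) * Complex.I) = z
        have : Complex.exp ((↑(u.arg + 2*Real.pi)) * Complex.I)
            = Complex.exp (u.arg * Complex.I) := by
          push_cast
          rw [add_mul, Complex.exp_add, Complex.exp_two_pi_mul_I, mul_one]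
        rw [this, huexp, hpu]
      · refine ⟨u.arg, ⟨hpos, by linarith [Complex.arg_le_pi u, Real.pi_pos]⟩, ?_⟩
        show p * Complex.exp ((u.arg:ℝ) * Complex.I) = z
        rw [huexp, hpu]
    · rintro - ⟨θ, ⟨hθ0, hθ2⟩, rfl⟩
      constructor
      · rw [mem_sphere_zero_iff_norm]
        simp [map_mul, hpabs, Complex.norm_exp]
      · intro hmem
        have h : p * Complex.exp ((θ:ℝ) * Complex.I) = p := by simpa using hmem
        have hexp1 : Complex.exp (θ * Complex.I) = 1 :=
          mul_left_cancel₀ hpne (h.trans (mul_one p).symm)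
        rw [Complex.exp_eq_one_iff] at hexp1
        obtain ⟨n, hn⟩ := hexp1
        have hθn : (θ : ℂ) = (n : ℂ) * (2*Real.pi) := by
          have h2 : (θ:ℂ) * Complex.I = ((n:ℂ) * (2*Real.pi)) * Complex.I := by
            rw [hn]; ring
          exact mul_right_cancel₀ Complex.I_ne_zero h2
        have hθn' : θ = (n : ℝ) * (2*Real.pi) := by exact_mod_cast hθn
        rcases le_or_gt (n:ℝ) 0 with hn0 | hn0
        · nlinarith [Real.pi_pos]
        · have : (1:ℝ) ≤ (n:ℝ) := by exact_mod_cast (by exact_mod_cast hn0 : (0:ℤ) < n)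
          nlinarith [Real.pi_pos]
  rw [himg]
  exact (isPreconnected_Ioo).image _ (by fun_prop)

lemma median3 (a b c : ℝ) :
    (a ≤ b ∧ b ≤ c) ∨ (a ≤ c ∧ c ≤ b) ∨ (b ≤ a ∧ a ≤ c) ∨ (b ≤ c ∧ c ≤ a)
      ∨ (c ≤ a ∧ a ≤ b) ∨ (c ≤ b ∧ b ≤ a) := by
  rcases le_total a b with h | h <;> rcases le_total b c with h' | h' <;>
    rcases le_total a c with h'' | h'' <;> tauto

lemma no_middle (φ : ℂ → ℝ) (hc : ContinuousOn φ (sphere (0:ℂ) 1))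
    (hi : InjOn φ (sphere (0:ℂ) 1)) (x₁ x₂ x₃ : ℂ)
    (h₁ : x₁ ∈ sphere (0:ℂ) 1) (h₂ : x₂ ∈ sphere (0:ℂ) 1) (h₃ : x₃ ∈ sphere (0:ℂ) 1)
    (n12 : x₁ ≠ x₂) (n23 : x₂ ≠ x₃) (o1 : φ x₁ ≤ φ x₂) (o2 : φ x₂ ≤ φ x₃) : False := by
  have hpre := sphere_diff_singleton_preconnected x₂ h₂
  have himg : IsPreconnected (φ '' (sphere (0:ℂ) 1 \ {x₂})) :=
    hpre.image φ (hc.mono diff_subset)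
  have hoc := himg.ordConnected
  have m1 : φ x₁ ∈ φ '' (sphere (0:ℂ) 1 \ {x₂}) := ⟨x₁, ⟨h₁, by simpa using n12⟩, rfl⟩
  have m3 : φ x₃ ∈ φ '' (sphere (0:ℂ) 1 \ {x₂}) := ⟨x₃, ⟨h₃, by simpa using n23.symm⟩, rfl⟩
  have hmem : φ x₂ ∈ φ '' (sphere (0:ℂ) 1 \ {x₂}) := hoc.out m1 m3 ⟨o1, o2⟩
  obtain ⟨y, ⟨hy, hy2⟩, hyeq⟩ := hmem
  exact hy2 (by simpa using hi hy h₂ hyeq)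

lemma no_circle_injOn (φ : ℂ → ℝ) (hc : ContinuousOn φ (sphere (0:ℂ) 1))
    (hi : InjOn φ (sphere (0:ℂ) 1)) : False := by
  have h1 : (1:ℂ) ∈ sphere (0:ℂ) 1 := by simp
  have h2 : (-1:ℂ) ∈ sphere (0:ℂ) 1 := by simp
  have h3 : Complex.I ∈ sphere (0:ℂ) 1 := by simp
  have n12 : (1:ℂ) ≠ -1 := by norm_num
  have n13 : (1:ℂ) ≠ Complex.I := by
    intro h; have := congrArg Complex.im h; simp at this
  have n23 : (-1:ℂ) ≠ Complex.I := by
    intro h; have := congrArg Complex.im h; simp at this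
  rcases median3 (φ 1) (φ (-1)) (φ Complex.I) with ⟨o1,o2⟩|⟨o1,o2⟩|⟨o1,o2⟩|⟨o1,o2⟩|⟨o1,o2⟩|⟨o1,o2⟩
  · exact no_middle φ hc hi 1 (-1) Complex.I h1 h2 h3 n12 n23 o1 o2
  · exact no_middle φ hc hi 1 Complex.I (-1) h1 h3 h2 n13 (Ne.symm n23) o1 o2
  · exact no_middle φ hc hi (-1) 1 Complex.I h2 h1 h3 (Ne.symm n12) n13 o1 o2
  · exact no_middle φ hc hi (-1) Complex.I 1 h2 h3 h1 n23 (Ne.symm n13) o1 o2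
  · exact no_middle φ hc hi Complex.I 1 (-1) h3 h1 h2 (Ne.symm n13) n12 o1 o2
  · exact no_middle φ hc hi Complex.I (-1) 1 h3 h2 h1 (Ne.symm n23) (Ne.symm n12) o1 o2

lemma isPreconnected_one_lt_norm : IsPreconnected {z : ℂ | 1 < ‖z‖} := by
  have h : {z : ℂ | 1 < ‖z‖}
      = (fun p : ℝ × ℂ => p.1 • p.2) '' (Ioi (1:ℝ) ×ˢ sphere (0:ℂ) 1) := by
    apply Subset.antisymm
    · intro z hz
      have hz1 : (1:ℝ) < ‖z‖ := hz
      have hzne : z ≠ 0 := by intro h; rw [h] at hz1; norm_num at hz1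
      refine ⟨(‖z‖, ‖z‖⁻¹ • z), ⟨hz1, ?_⟩, ?_⟩
      · rw [mem_sphere_zero_iff_norm, norm_smul, norm_inv, norm_norm]
        exact inv_mul_cancel₀ (lt_trans one_pos hz1).ne'
      · simp only [smul_smul]
        rw [mul_inv_cancel₀ (by positivity), one_smul]
    · rintro - ⟨⟨t, z⟩, ⟨ht, hz⟩, rfl⟩
      have hz1 : ‖z‖ = 1 := mem_sphere_zero_iff_norm.mp hz
      have : (1:ℝ) < t := ht
      simp only [mem_setOf_eq, norm_smul, hz1, mul_one]
      rw [Real.norm_eq_abs, abs_of_pos (by linarith)]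
      exact this
  rw [h]
  apply IsPreconnected.image
  · exact (isPreconnected_Ioi).prod
      (isPreconnected_sphere (by rw [Complex.rank_real_complex]; norm_num) 0 1)
  · fun_prop






/-- Real-linear map `z ↦ a * conj z + b * z`. -/
def lmapAux (a b : ℂ) : ℂ →ₗ[ℝ] ℂ where
  toFun z := a * (starRingEnd ℂ) z + b * z
  map_add' x y := by simp [map_add]; ring
  map_smul' r z := by
    simp only [Complex.real_smul, map_mul, Complex.conj_ofReal, RingHom.id_apply]
    ring

/-- The linear part of the ellipse parametrization. -/
def conicEquiv (γ s : ℝ) (hγ2 : (1:ℝ) - γ^2 ≠ 0) (hs : s ≠ 0) : ℂ ≃ₗ[ℝ] ℂ := by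
  have hγ2' : (1:ℂ) - (γ:ℂ)^2 ≠ 0 := by
    have : ((1 - γ^2 : ℝ) : ℂ) ≠ 0 := Complex.ofReal_ne_zero.mpr hγ2
    convert this using 1; push_cast; ring
  have hs' : (s:ℂ) ≠ 0 := Complex.ofReal_ne_zero.mpr hs
  exact
  { lmapAux ((s:ℂ)/(1-(γ:ℂ)^2)) ((γ:ℂ)*(s:ℂ)/(1-(γ:ℂ)^2)) with
    invFun := fun x => ((starRingEnd ℂ) x - (γ:ℂ)*x)/(s:ℂ)
    left_inv := by
      intro z
      simp only [lmapAux, LinearMap.coe_mk, AddHom.coe_mk, map_add, map_mul, map_div₀,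
        Complex.conj_ofReal, Complex.conj_conj, map_sub, map_one, map_pow]
      field_simp
      ring
    right_inv := by
      intro x
      simp only [lmapAux, LinearMap.coe_mk, AddHom.coe_mk, map_sub, map_mul, map_div₀,
        Complex.conj_ofReal, Complex.conj_conj]
      field_simp
      ring }

lemma conicEquiv_apply (γ s : ℝ) (hγ2 : (1:ℝ) - γ^2 ≠ 0) (hs : s ≠ 0) (z : ℂ) :
    conicEquiv γ s hγ2 hs z
      = (s:ℂ)/(1-(γ:ℂ)^2) * (starRingEnd ℂ) z + (γ:ℂ)*(s:ℂ)/(1-(γ:ℂ)^2) * z := rfl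

lemma conicEquiv_symm_apply (γ s : ℝ) (hγ2 : (1:ℝ) - γ^2 ≠ 0) (hs : s ≠ 0) (x : ℂ) :
    (conicEquiv γ s hγ2 hs).symm x = ((starRingEnd ℂ) x - (γ:ℂ)*x)/(s:ℂ) := rfl

/-- The ellipse `{x | |conj x - γ x - conj w| = s}` as an affine image of the unit circle. -/
def conicAffine (γ s : ℝ) (w : ℂ) (hγ2 : (1:ℝ) - γ^2 ≠ 0) (hs : s ≠ 0) : ℂ ≃ᵃ[ℝ] ℂ :=
  ((conicEquiv γ s hγ2 hs).toAffineEquiv).trans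
    (AffineEquiv.constVAdd ℝ ℂ ((w + (γ:ℂ) * (starRingEnd ℂ) w)/(1-(γ:ℂ)^2)))

lemma conicAffine_apply (γ s : ℝ) (w : ℂ) (hγ2 : (1:ℝ) - γ^2 ≠ 0) (hs : s ≠ 0) (z : ℂ) :
    conicAffine γ s w hγ2 hs z
      = (w + (γ:ℂ) * (starRingEnd ℂ) w)/(1-(γ:ℂ)^2)
        + ((s:ℂ)/(1-(γ:ℂ)^2) * (starRingEnd ℂ) z + (γ:ℂ)*(s:ℂ)/(1-(γ:ℂ)^2) * z) := rfl

lemma conicAffine_continuous (γ s : ℝ) (w : ℂ) (hγ2 : (1:ℝ) - γ^2 ≠ 0) (hs : s ≠ 0) :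
    Continuous ⇑(conicAffine γ s w hγ2 hs) := by
  have : ⇑(conicAffine γ s w hγ2 hs) = fun z =>
      (w + (γ:ℂ) * (starRingEnd ℂ) w)/(1-(γ:ℂ)^2)
        + ((s:ℂ)/(1-(γ:ℂ)^2) * (starRingEnd ℂ) z + (γ:ℂ)*(s:ℂ)/(1-(γ:ℂ)^2) * z) := by
    funext z; exact conicAffine_apply γ s w hγ2 hs z
  rw [this]
  exact continuous_const.add (((continuous_const.mul Complex.continuous_conj)).add
    (continuous_const.mul continuous_id))

/-- The key algebraic identity for the parametrization. -/
lemma conicAffine_key (γ s : ℝ) (w : ℂ) (hγ2 : (1:ℝ) - γ^2 ≠ 0) (hs : s ≠ 0) (u : ℂ) :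
    (starRingEnd ℂ) (conicAffine γ s w hγ2 hs u) - (γ:ℂ) * (conicAffine γ s w hγ2 hs u)
      - (starRingEnd ℂ) w = (s:ℂ) * u := by
  have hγ2' : (1:ℂ) - (γ:ℂ)^2 ≠ 0 := by
    have : ((1 - γ^2 : ℝ) : ℂ) ≠ 0 := Complex.ofReal_ne_zero.mpr hγ2
    convert this using 1; push_cast; ring
  rw [conicAffine_apply]
  simp only [map_add, map_mul, map_div₀, Complex.conj_ofReal, Complex.conj_conj, map_sub,
    map_one, map_pow]
  field_simp
  ring

lemma conicAffine_symm_apply (γ s : ℝ) (w : ℂ) (hγ2 : (1:ℝ) - γ^2 ≠ 0) (hs : s ≠ 0) (x : ℂ) :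
    (conicAffine γ s w hγ2 hs).symm x
      = ((starRingEnd ℂ) x - (γ:ℂ)*x - (starRingEnd ℂ) w)/(s:ℂ) := by
  have hs' : (s:ℂ) ≠ 0 := Complex.ofReal_ne_zero.mpr hs
  apply (conicAffine γ s w hγ2 hs).injective
  rw [(conicAffine γ s w hγ2 hs).apply_symm_apply]
  have hkey := conicAffine_key γ s w hγ2 hs (((starRingEnd ℂ) x - (γ:ℂ)*x - (starRingEnd ℂ) w)/(s:ℂ))
  -- from hkey : L (A v) - conj w = s * v = L x - conj w, deduce A v = x using injectivity of L
  set y := conicAffine γ s w hγ2 hs (((starRingEnd ℂ) x - (γ:ℂ)*x - (starRingEnd ℂ) w)/(s:ℂ)) with hy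
  rw [mul_div_cancel₀ _ hs'] at hkey
  have h1 : (starRingEnd ℂ) y - (γ:ℂ) * y = (starRingEnd ℂ) x - (γ:ℂ)*x := by
    linear_combination hkey
  -- L injective since 1 - γ² ≠ 0
  have h2 : (starRingEnd ℂ) ((starRingEnd ℂ) y - (γ:ℂ) * y)
      = (starRingEnd ℂ) ((starRingEnd ℂ) x - (γ:ℂ)*x) := by rw [h1]
  simp only [map_sub, map_mul, Complex.conj_ofReal, Complex.conj_conj] at h2
  have hγ2' : (1:ℂ) - (γ:ℂ)^2 ≠ 0 := by
    have : ((1 - γ^2 : ℝ) : ℂ) ≠ 0 := Complex.ofReal_ne_zero.mpr hγ2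
    convert this using 1; push_cast; ring
  have : ((1:ℂ) - (γ:ℂ)^2) * y = ((1:ℂ) - (γ:ℂ)^2) * x := by
    linear_combination h2 + (γ:ℂ) * h1
  exact (mul_left_cancel₀ hγ2' this).symm

lemma affineEquiv_mem_image (A : ℂ ≃ᵃ[ℝ] ℂ) (s : Set ℂ) (x : ℂ) :
    x ∈ ⇑A '' s ↔ A.symm x ∈ s := by
  constructor
  · rintro ⟨u, hu, rfl⟩; simpa using hu
  · intro h; exact ⟨A.symm x, h, A.apply_symm_apply x⟩






lemma ae_memK {μ : Measure ℂ} {K : Set ℂ} (hKsupp : μ Kᶜ = 0) : ∀ᵐ ζ ∂μ, ζ ∈ K := by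
  rw [ae_iff]
  exact hKsupp

lemma integrable_inv_sub {μ : Measure ℂ} [IsFiniteMeasure μ] {K : Set ℂ} (hKsupp : μ Kᶜ = 0)
    {z : ℂ} {δ : ℝ} (hδ : 0 < δ) (hdist : ∀ ζ ∈ K, δ ≤ dist z ζ) :
    Integrable (fun ζ => (z - ζ)⁻¹) μ := by
  apply Integrable.mono' (integrable_const (δ⁻¹ : ℝ))
  · exact ((measurable_const.sub measurable_id).inv).aestronglyMeasurable
  · filter_upwards [ae_memK hKsupp] with ζ hζ
    rw [norm_inv]
    have h1 : δ ≤ ‖z - ζ‖ := by rw [← dist_eq_norm]; exact hdist ζ hζ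
    exact inv_anti₀ hδ h1

lemma f_differentiableAt {μ : Measure ℂ} [IsFiniteMeasure μ] {K : Set ℂ} (hKc : IsClosed K)
    (hKsupp : μ Kᶜ = 0) {z : ℂ} (hz : z ∉ K) :
    DifferentiableAt ℂ (fun x => ∫ ζ, (x - ζ)⁻¹ ∂μ) z := by
  obtain ⟨ε, hε0, hball⟩ : ∃ ε > 0, ball z ε ⊆ Kᶜ :=
    Metric.isOpen_iff.mp hKc.isOpen_compl z hz
  have hdist : ∀ x ∈ ball z (ε/2), ∀ ζ ∈ K, ε/2 ≤ dist x ζ := by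
    intro x hx ζ hζ
    by_contra hcon
    push_neg at hcon
    have : ζ ∈ ball z ε := by
      have h1 : dist x z < ε/2 := mem_ball.mp hx
      have h2 : dist ζ x < ε/2 := by rw [dist_comm]; exact hcon
      have := dist_triangle ζ x z
      exact mem_ball.mpr (by linarith)
    exact hball this hζ
  have key := hasDerivAt_integral_of_dominated_loc_of_deriv_le (μ := μ)
      (F := fun (x : ℂ) ζ => (x - ζ)⁻¹) (F' := fun (x : ℂ) ζ => -(((x - ζ)^2)⁻¹))
      (x₀ := z) (bound := fun _ => ((ε/2)^2)⁻¹) (ball_mem_nhds z (half_pos hε0))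
      (Eventually.of_forall fun x =>
        ((measurable_const.sub measurable_id).inv).aestronglyMeasurable)
      (integrable_inv_sub hKsupp (half_pos hε0) (hdist z (mem_ball_self (half_pos hε0))))
      ((((measurable_const.sub measurable_id).pow_const 2).inv).neg).aestronglyMeasurable
      ?_ (integrable_const _) ?_
  · exact key.2.differentiableAt
  · filter_upwards [ae_memK hKsupp] with ζ hζ
    intro x hx
    rw [norm_neg, norm_inv, norm_pow]
    apply inv_anti₀ (by positivity)
    apply pow_le_pow_left₀ (by linarith [half_pos hε0])
    rw [← dist_eq_norm]
    exact hdist x hx ζ hζ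
  · filter_upwards [ae_memK hKsupp] with ζ hζ
    intro x hx
    have hxζ : x - ζ ≠ 0 := by
      rw [sub_ne_zero]
      intro h
      have := hdist x hx ζ hζ
      rw [h] at this
      simp at this
      linarith [half_pos hε0]
    have h := ((hasDerivAt_id x).sub_const ζ).inv hxζ
    have h' : HasDerivAt (fun x => x - ζ)⁻¹ (-((x - ζ) ^ 2)⁻¹) x := by
      simpa [id, neg_div, one_div] using h
    exact h'

lemma f_tendsto_zero {μ : Measure ℂ} [IsFiniteMeasure μ] {K : Set ℂ} (hKsupp : μ Kᶜ = 0)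
    {R : ℝ} (hR0 : 0 ≤ R) (hKR : K ⊆ closedBall 0 R) :
    Tendsto (fun z => ∫ ζ, (z - ζ)⁻¹ ∂μ) (cobounded ℂ) (𝓝 0) := by
  set m := (μ Set.univ).toReal with hm
  have hg : Tendsto (fun z : ℂ => (‖z‖ - R)⁻¹ * m) (cobounded ℂ) (𝓝 0) := by
    have h1 : Tendsto (fun z : ℂ => (‖z‖ - R)⁻¹) (cobounded ℂ) (𝓝 0) :=
      tendsto_inv_atTop_zero.comp
        ((tendsto_atTop_add_const_right _ (-R) tendsto_norm_cobounded_atTop).congr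
          (fun z => by ring_nf))
    simpa using h1.mul_const m
  apply squeeze_zero_norm' ?_ hg
  · filter_upwards [tendsto_norm_cobounded_atTop.eventually_ge_atTop (R+1)] with z hz
    apply norm_integral_le_of_norm_le_const
    filter_upwards [ae_memK hKsupp] with ζ hζ
    have hζR : ‖ζ‖ ≤ R := mem_closedBall_zero_iff.mp (hKR hζ)
    have h1 : ‖z‖ - R ≤ ‖z - ζ‖ := by
      have := norm_sub_norm_le z ζ
      linarith [abs_le.mp (abs_norm_sub_norm_le z ζ)]
    rw [norm_inv]
    exact inv_anti₀ (by linarith) h1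

lemma zf_tendsto {μ : Measure ℂ} [IsFiniteMeasure μ] {K : Set ℂ} (hKsupp : μ Kᶜ = 0)
    {R : ℝ} (hR0 : 0 ≤ R) (hKR : K ⊆ closedBall 0 R) :
    Tendsto (fun z => z * ∫ ζ, (z - ζ)⁻¹ ∂μ) (cobounded ℂ)
      (𝓝 (((μ Set.univ).toReal : ℂ))) := by
  set m := (μ Set.univ).toReal with hm
  rw [← tendsto_sub_nhds_zero_iff]
  have hg : Tendsto (fun z : ℂ => R * (‖z‖ - R)⁻¹ * m) (cobounded ℂ) (𝓝 0) := by
    have h1 : Tendsto (fun z : ℂ => (‖z‖ - R)⁻¹) (cobounded ℂ) (𝓝 0) :=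
      tendsto_inv_atTop_zero.comp
        ((tendsto_atTop_add_const_right _ (-R) tendsto_norm_cobounded_atTop).congr
          (fun z => by ring_nf))
    have := (h1.const_mul R).mul_const m
    simpa using this
  apply squeeze_zero_norm' ?_ hg
  · filter_upwards [tendsto_norm_cobounded_atTop.eventually_ge_atTop (R+1)] with z hz
    have hint : Integrable (fun ζ => (z - ζ)⁻¹) μ := by
      apply integrable_inv_sub hKsupp (show (0:ℝ) < 1 by norm_num)
      intro ζ hζ
      have hζR : ‖ζ‖ ≤ R := mem_closedBall_zero_iff.mp (hKR hζ)
      rw [dist_eq_norm]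
      linarith [abs_le.mp (abs_norm_sub_norm_le z ζ)]
    have hid : z * (∫ ζ, (z - ζ)⁻¹ ∂μ) - (m:ℂ) = ∫ ζ, (z * (z - ζ)⁻¹ - 1) ∂μ := by
      rw [integral_sub (hint.const_mul z) (integrable_const 1)]
      rw [integral_const_mul, integral_const]
      simp [Complex.real_smul]
      rfl
    rw [hid]
    apply norm_integral_le_of_norm_le_const
    filter_upwards [ae_memK hKsupp] with ζ hζ
    have hζR : ‖ζ‖ ≤ R := mem_closedBall_zero_iff.mp (hKR hζ)
    have h1 : ‖z‖ - R ≤ ‖z - ζ‖ := by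
      linarith [abs_le.mp (abs_norm_sub_norm_le z ζ)]
    have hzζ : z - ζ ≠ 0 := by
      intro h
      rw [h] at h1
      simp only [norm_zero] at h1
      linarith
    have hrw : z * (z - ζ)⁻¹ - 1 = ζ * (z - ζ)⁻¹ := by
      field_simp
      ring
    rw [hrw, norm_mul, norm_inv]
    have : ‖z - ζ‖⁻¹ ≤ (‖z‖ - R)⁻¹ := inv_anti₀ (by linarith) h1
    apply mul_le_mul hζR this (by positivity) hR0






lemma im_eq_zero_on (H : ℂ → ℂ) (D Ω : Set ℂ) (hD : IsOpen D) (hΩ : IsOpen Ω)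
    (hcl : closure Ω ⊆ D) (hdiff : ∀ z ∈ D, DifferentiableAt ℂ H z)
    (hfront : ∀ z ∈ frontier Ω, (H z).im = 0)
    (hlim : Tendsto (fun z => (H z).im) (cobounded ℂ) (𝓝 0))
    {z : ℂ} (hz : z ∈ Ω) : (H z).im = 0 := by
  have key : ∀ ε > (0:ℝ), |(H z).im| ≤ ε := by
    intro ε hε
    -- eventual bound at infinity
    have hev : ∀ᶠ x in cobounded ℂ, |(H x).im| < ε := by
      have := Metric.tendsto_nhds.mp hlim ε hε
      filter_upwards [this] with x hx
      simpa [Real.dist_eq] using hx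
    rw [← comap_norm_atTop, eventually_comap] at hev
    rw [eventually_atTop] at hev
    obtain ⟨N, hN⟩ := hev
    set R : ℝ := max N (‖z‖ + 1) with hR
    have hRz : ‖z‖ < R := lt_of_lt_of_le (by linarith) (le_max_right _ _)
    have hRN : N ≤ R := le_max_left _ _
    have hbig : ∀ x : ℂ, R ≤ ‖x‖ → |(H x).im| < ε := fun x hx =>
      hN ‖x‖ (le_trans hRN hx) x rfl
    set V : Set ℂ := Ω ∩ ball 0 R with hV
    have hVopen : IsOpen V := hΩ.inter isOpen_ball
    have hVbdd : IsBounded V := (isBounded_ball).subset inter_subset_right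
    have hzV : z ∈ V := ⟨hz, by simpa [mem_ball, dist_eq_norm] using hRz⟩
    have hclV : closure V ⊆ closure Ω := closure_mono inter_subset_left
    have hclVD : closure V ⊆ D := hclV.trans hcl
    -- both exponentials
    have main : ∀ σ : ℝ, σ = 1 ∨ σ = -1 → -(σ * (H z).im) ≤ ε := by
      intro σ hσ
      have hσ1 : |σ| = 1 := by rcases hσ with h | h <;> simp [h]
      set g : ℂ → ℂ := fun x => Complex.exp ((σ:ℂ) * Complex.I * H x) with hg
      have hnorm : ∀ x, ‖g x‖ = Real.exp (-(σ * (H x).im)) := by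
        intro x
        rw [hg]
        simp only [Complex.norm_exp]
        congr 1
        simp [Complex.mul_re, Complex.mul_im, Complex.I_re, Complex.I_im]
      have hd : DiffContOnCl ℂ g V := by
        constructor
        · intro x hx
          have : DifferentiableAt ℂ g x := by
            apply DifferentiableAt.cexp
            exact (differentiableAt_const _).mul (hdiff x (hclVD (subset_closure hx)))
          exact this.differentiableWithinAt
        · intro x hx
          have : ContinuousAt g x := by
            apply ContinuousAt.cexp
            exact continuousAt_const.mul (hdiff x (hclVD hx)).continuousAt
          exact this.continuousWithinAt
      have hfr : ∀ x ∈ frontier V, ‖g x‖ ≤ Real.exp ε := by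
        intro x hxf
        have hxcl : x ∈ closure V := frontier_subset_closure hxf
        have hxnotV : x ∉ V := by
          rw [hVopen.frontier_eq] at hxf
          exact hxf.2
        rw [hnorm, Real.exp_le_exp]
        by_cases hxΩ : x ∈ Ω
        · -- then x is on the sphere
          have hxR : R ≤ ‖x‖ := by
            by_contra hcon
            push_neg at hcon
            exact hxnotV ⟨hxΩ, by simpa [mem_ball, dist_eq_norm] using hcon⟩
          have := (hbig x hxR).le
          calc -(σ * (H x).im) ≤ |σ * (H x).im| := neg_le_abs _
            _ = |(H x).im| := by rw [abs_mul, hσ1, one_mul]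
            _ ≤ ε := this
        · have hxfrΩ : x ∈ frontier Ω := by
            rw [hΩ.frontier_eq]
            exact ⟨hclV hxcl, hxΩ⟩
          rw [hfront x hxfrΩ]
          simp [hε.le]
      have := Complex.norm_le_of_forall_mem_frontier_norm_le hVbdd hd hfr (subset_closure hzV)
      rw [hnorm, Real.exp_le_exp] at this
      exact this
    have h1 := main 1 (Or.inl rfl)
    have h2 := main (-1) (Or.inr rfl)
    rw [abs_le]
    constructor <;> [linarith; linarith]
  have : |(H z).im| ≤ 0 := le_of_forall_pos_le_add (by intro ε hε; simpa using key ε hε)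
  simpa using le_antisymm this (abs_nonneg _)

lemma const_of_im_zero (H : ℂ → ℂ) (Ω : Set ℂ) (hΩ : IsOpen Ω) (hconn : IsPreconnected Ω)
    (hdiff : ∀ z ∈ Ω, DifferentiableAt ℂ H z) (him : ∀ z ∈ Ω, (H z).im = 0)
    {z₀ : ℂ} (hz₀ : z₀ ∈ Ω) : ∃ k : ℝ, ∀ z ∈ Ω, H z = (k:ℂ) := by
  have han : AnalyticOnNhd ℂ H Ω := by
    apply DifferentiableOn.analyticOnNhd _ hΩ
    exact fun z hz => (hdiff z hz).differentiableWithinAt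
  rcases han.is_constant_or_isOpen hconn with ⟨v, hv⟩ | hopen
  · refine ⟨v.re, fun z hz => ?_⟩
    have hvim : v.im = 0 := by rw [← hv z₀ hz₀]; exact him z₀ hz₀
    rw [hv z hz]
    exact Complex.ext (by simp) (by simp [hvim])
  · exfalso
    have himg : IsOpen (H '' Ω) := hopen Ω subset_rfl hΩ
    obtain ⟨r, hr0, hball⟩ := Metric.isOpen_iff.mp himg (H z₀) ⟨z₀, hz₀, rfl⟩
    have : H z₀ + Complex.I * (r/2 : ℝ) ∈ H '' Ω := by
      apply hball
      rw [mem_ball, dist_eq_norm]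
      simp only [add_sub_cancel_left]
      rw [norm_mul]
      simp only [Complex.norm_I, one_mul, Complex.norm_real, Real.norm_eq_abs]
      rw [abs_of_pos (by linarith)]
      linarith
    obtain ⟨y, hy, hyeq⟩ := this
    have h1 := him y hy
    have h2 := congrArg Complex.im hyeq
    rw [h1] at h2
    simp only [Complex.add_im, Complex.mul_im, Complex.I_re, Complex.I_im,
      Complex.ofReal_re, Complex.ofReal_im] at h2
    have h3 := him z₀ hz₀
    rw [h3] at h2
    simp at h2
    linarith


lemma conicAffine_symm_continuous (γ s : ℝ) (w : ℂ) (hγ2 : (1:ℝ) - γ^2 ≠ 0) (hs : s ≠ 0) :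
    Continuous ⇑(conicAffine γ s w hγ2 hs).symm := by
  have : ⇑(conicAffine γ s w hγ2 hs).symm
      = fun x => ((starRingEnd ℂ) x - (γ:ℂ)*x - (starRingEnd ℂ) w)/(s:ℂ) :=
    funext (conicAffine_symm_apply γ s w hγ2 hs)
  rw [this]
  exact ((Complex.continuous_conj.sub (continuous_const.mul continuous_id)).sub
    continuous_const).div_const _

lemma mem_slitPlane_of_unit {z : ℂ} (h1 : ‖z‖ = 1) (h2 : z ≠ -1) :
    z ∈ Complex.slitPlane := by
  by_cases him : z.im = 0
  · have hz : z = (z.re : ℂ) := Complex.ext rfl (by simp [him])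
    rw [hz] at h1 h2 ⊢
    rw [Complex.norm_real, Real.norm_eq_abs] at h1
    rcases (abs_eq (by norm_num : (0:ℝ) ≤ 1)).mp h1 with h | h
    · left; simpa using (by norm_num [h] : (0:ℝ) < z.re)
    · exfalso; apply h2; rw [h]; push_cast; ring
  · right; exact him

lemma neg_mul_conj_slit {a b : ℂ} (ha : ‖a‖ = 1) (hb : ‖b‖ = 1)
    (hab : a ≠ b) : (-(a * (starRingEnd ℂ) b)) ∈ Complex.slitPlane := by
  apply mem_slitPlane_of_unit
  · rw [norm_neg, norm_mul, Complex.norm_conj, ha, hb, one_mul]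
  · intro h
    apply hab
    have h1 : a * (starRingEnd ℂ) b = 1 := by
      have := congrArg Neg.neg h
      simpa using this
    have h2 : a * ((starRingEnd ℂ) b * b) = b := by rw [← mul_assoc, h1, one_mul]
    have h3 : (starRingEnd ℂ) b * b = ((Complex.normSq b : ℝ) : ℂ) := by
      rw [mul_comm, Complex.mul_conj]
    have h4 : Complex.normSq b = 1 := by
      rw [← Complex.sq_norm, hb]; norm_num
    rw [h3, h4] at h2
    simpa using h2

lemma arg_inj_unit {a b : ℂ} (ha : ‖a‖ = 1) (hb : ‖b‖ = 1)
    (h : Complex.arg a = Complex.arg b) : a = b := by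
  have h1 := Complex.norm_mul_exp_arg_mul_I a
  have h2 := Complex.norm_mul_exp_arg_mul_I b
  rw [ha] at h1
  rw [hb] at h2
  rw [← h1, ← h2, h]

end EinsteinAux


set_option maxHeartbeats 1600000 in
open EinsteinAux in
/-- Einstein rings with nonzero shear are ellipses: if a compactly supported mass
distribution with shear `γ ≠ 0` produces a whole image curve `Γ` (the frontier of a
bounded domain surrounding the mass, homeomorphic to a circle), then `Γ` is an
ellipse, i.e. the image of the unit circle under an invertible real-affine map. -/
theorem einstein_ring_with_shear_is_ellipse
    (μ : Measure ℂ) (hfinμ : IsFiniteMeasure μ)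
    (K : Set ℂ) (hKcpt : IsCompact K) (hKsupp : μ Kᶜ = 0)
    (γ : ℝ) (hγ : γ ≠ 0) (w : ℂ)
    (U : Set ℂ) (hUopen : IsOpen U) (hUconn : IsConnected U)
    (hUbdd : Bornology.IsBounded U) (hKU : K ⊆ U)
    (hhomeo : Nonempty (frontier U ≃ₜ Metric.sphere (0 : ℂ) 1))
    (hdisj : Disjoint (frontier U) K)
    (hext : IsConnected (closure U)ᶜ)
    (hlens : ∀ z ∈ frontier U,
      starRingEnd ℂ z - (∫ ζ, (z - ζ)⁻¹ ∂μ) - (γ : ℂ) * z = starRingEnd ℂ w) :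
    ∃ T : ℂ ≃ᵃ[ℝ] ℂ, frontier U = ⇑T '' Metric.sphere (0 : ℂ) 1 := by
  classical
  obtain ⟨R₀, hR₀⟩ := (hUbdd.closure).subset_closedBall 0
  set R₁ : ℝ := max R₀ 0 with hR₁def
  have hR₁0 : (0:ℝ) ≤ R₁ := le_max_right _ _
  have hclR : closure U ⊆ closedBall 0 R₁ :=
    hR₀.trans (closedBall_subset_closedBall (le_max_left _ _))
  have hUne : U.Nonempty := hUconn.nonempty
  have hKcl : IsClosed K := hKcpt.isClosed
  set f : ℂ → ℂ := fun z => ∫ ζ, (z - ζ)⁻¹ ∂μ with hfdef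
  set m : ℝ := (μ Set.univ).toReal with hmdef
  set Ω : Set ℂ := (closure U)ᶜ with hΩdef
  set W : Set ℂ := interior (closure U) with hWdef
  set S : Set ℂ := closure U \ W with hSdef
  have hΩopen : IsOpen Ω := isClosed_closure.isOpen_compl
  have hWopen : IsOpen W := isOpen_interior
  have hUW : U ⊆ W := interior_maximal subset_closure hUopen
  have hWclU : W ⊆ closure U := interior_subset
  have hfrontU : frontier U = closure U \ U := hUopen.frontier_eq
  have hSΓ : S ⊆ frontier U := by
    rw [hfrontU]; exact fun x hx => ⟨hx.1, fun hU => hx.2 (hUW hU)⟩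
  have hfrontΩ : frontier Ω = S := by
    rw [hΩdef, frontier_compl, isClosed_closure.frontier_eq]
  have hΓK : ∀ x ∈ frontier U, x ∉ K := fun x hx => Set.disjoint_left.mp hdisj hx
  have hKclU : K ⊆ closure U := hKU.trans subset_closure
  have hΩK : Ω ⊆ Kᶜ := fun x hx hK => hx (hKclU hK)
  have hclΩK : closure Ω ⊆ Kᶜ := by
    intro x hx
    rw [closure_eq_self_union_frontier] at hx
    rcases hx with h | h
    · exact hΩK h
    · rw [hfrontΩ] at h
      exact hΓK x (hSΓ h)
  have huniv : ∀ x : ℂ, x ∈ W ∨ x ∈ S ∨ x ∈ Ω := by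
    intro x
    by_cases h1 : x ∈ closure U
    · by_cases h2 : x ∈ W
      · exact Or.inl h2
      · exact Or.inr (Or.inl ⟨h1, h2⟩)
    · exact Or.inr (Or.inr h1)
  have hWΩ : Disjoint W Ω := by
    rw [Set.disjoint_left]; exact fun x hx hΩx => hΩx (hWclU hx)
  have hSΩ : ∀ x ∈ S, x ∉ Ω := fun x hx hc => hc hx.1
  -- analytic facts about f
  have hfd : ∀ z ∈ Kᶜ, DifferentiableAt ℂ f z := fun z hz =>
    EinsteinAux.f_differentiableAt hKcl hKsupp hz
  have hKR : K ⊆ closedBall 0 R₁ := hKclU.trans hclR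
  have hf0 : Tendsto f (cobounded ℂ) (𝓝 0) :=
    EinsteinAux.f_tendsto_zero hKsupp hR₁0 hKR
  have hzf : Tendsto (fun z => z * f z) (cobounded ℂ) (𝓝 ((m:ℝ):ℂ)) :=
    EinsteinAux.zf_tendsto hKsupp hR₁0 hKR
  set Hf : ℂ → ℂ := fun z =>
    f z * ((1 - (γ:ℂ)^2) * z - (γ:ℂ) * f z - (w + (γ:ℂ) * (starRingEnd ℂ) w)) with hHdef
  set k : ℝ := (1 - γ^2) * m with hkdef
  have hHdiff : ∀ z ∈ Kᶜ, DifferentiableAt ℂ Hf z := by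
    intro z hz
    have h1 := hfd z hz
    have h2 : DifferentiableAt ℂ
        (fun z => (1 - (γ:ℂ)^2) * z - (γ:ℂ) * f z - (w + (γ:ℂ) * (starRingEnd ℂ) w)) z :=
      ((differentiableAt_id.const_mul _).sub (h1.const_mul _)).sub (differentiableAt_const _)
    exact h1.mul h2
  have hΓf : ∀ x ∈ frontier U,
      f x = (starRingEnd ℂ) x - (γ:ℂ) * x - (starRingEnd ℂ) w := by
    intro x hx
    have h := hlens x hx
    simp only [hfdef]
    linear_combination -h
  have hΓH : ∀ x ∈ frontier U,
      Hf x = (Complex.normSq ((starRingEnd ℂ) x - (γ:ℂ) * x - (starRingEnd ℂ) w) : ℂ) := by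
    intro x hx
    have hfx := hΓf x hx
    simp only [hHdef]
    rw [hfx, ← Complex.mul_conj]
    congr 1
    simp only [map_sub, map_mul, Complex.conj_conj, Complex.conj_ofReal]
    ring
  have hHim0 : ∀ x ∈ frontier Ω, (Hf x).im = 0 := by
    intro x hx
    rw [hfrontΩ] at hx
    rw [hΓH x (hSΓ hx)]
    exact Complex.ofReal_im _
  have hHtend : Tendsto Hf (cobounded ℂ) (𝓝 ((k:ℝ):ℂ)) := by
    have heq : ∀ z, (1 - (γ:ℂ)^2) * (z * f z) - (γ:ℂ) * (f z * f z)
        - (w + (γ:ℂ) * (starRingEnd ℂ) w) * f z = Hf z := by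
      intro z; simp only [hHdef]; ring
    have h3 := ((hzf.const_mul ((1:ℂ) - (γ:ℂ)^2)).sub
        ((hf0.mul hf0).const_mul ((γ:ℂ)))).sub
        (hf0.const_mul (w + (γ:ℂ) * (starRingEnd ℂ) w))
    have h4 := h3.congr heq
    have h5 : (1 - (γ:ℂ)^2) * ((m:ℝ):ℂ) - (γ:ℂ) * ((0:ℂ) * 0)
        - (w + (γ:ℂ) * (starRingEnd ℂ) w) * 0 = ((k:ℝ):ℂ) := by
      rw [hkdef]; push_cast; ring
    rwa [h5] at h4
  have hHimtend : Tendsto (fun z => (Hf z).im) (cobounded ℂ) (𝓝 0) := by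
    have := (Complex.continuous_im.tendsto (((k:ℝ):ℂ))).comp hHtend
    exact this
  have hΩconn : IsPreconnected Ω := hext.isPreconnected
  have hΩim0 : ∀ z ∈ Ω, (Hf z).im = 0 := fun z hz =>
    EinsteinAux.im_eq_zero_on Hf Kᶜ Ω hKcl.isOpen_compl hΩopen hclΩK hHdiff hHim0 hHimtend hz
  have hbigΩ : ∀ x : ℂ, R₁ < ‖x‖ → x ∈ Ω := by
    intro x hx hc
    exact absurd (mem_closedBall_zero_iff.mp (hclR hc)) (not_le.mpr hx)
  have hΩne : Ω.Nonempty := by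
    refine ⟨((R₁+1 : ℝ) : ℂ), hbigΩ _ ?_⟩
    rw [Complex.norm_real, Real.norm_eq_abs, abs_of_pos (by linarith)]
    linarith
  obtain ⟨z₀, hz₀⟩ := hΩne
  obtain ⟨k₀, hk₀⟩ := EinsteinAux.const_of_im_zero Hf Ω hΩopen hΩconn
    (fun z hz => hHdiff z (hΩK hz)) hΩim0 hz₀
  have hev : ∀ᶠ z in cobounded ℂ, Hf z = (k₀:ℂ) := by
    filter_upwards [tendsto_norm_cobounded_atTop.eventually_ge_atTop (R₁+1)] with z hz
    exact hk₀ z (hbigΩ z (by linarith))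
  have hk₀k : (k₀:ℂ) = ((k:ℝ):ℂ) :=
    tendsto_nhds_unique (tendsto_const_nhds.congr' (hev.mono fun z h => h.symm)) hHtend
  have hkk : k₀ = k := by exact_mod_cast hk₀k
  have hSk : ∀ x ∈ S, Complex.normSq ((starRingEnd ℂ) x - (γ:ℂ)*x - (starRingEnd ℂ) w) = k := by
    intro x hx
    have hxΓ : x ∈ frontier U := hSΓ hx
    have hxK : x ∈ Kᶜ := hΓK x hxΓ
    have hcls : x ∈ closure Ω := by
      rw [← hfrontΩ] at hx; exact frontier_subset_closure hx
    have hne : (𝓝[Ω] x).NeBot := mem_closure_iff_nhdsWithin_neBot.mp hcls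
    have h1 : Tendsto Hf (𝓝[Ω] x) (𝓝 (Hf x)) :=
      ((hHdiff x hxK).continuousAt).continuousWithinAt
    have h2 : Tendsto Hf (𝓝[Ω] x) (𝓝 ((k:ℝ):ℂ)) := by
      apply tendsto_const_nhds.congr'
      filter_upwards [self_mem_nhdsWithin] with z hz
      rw [hk₀ z hz, hkk]
    have h3 : Hf x = ((k:ℝ):ℂ) := tendsto_nhds_unique h1 h2
    have h4 := (hΓH x hxΓ).symm.trans h3
    exact_mod_cast h4
  have hSne : S.Nonempty := by
    rcases Set.eq_empty_or_nonempty S with h | h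
    · exfalso
      have hWeq : closure U = W := by
        apply subset_antisymm _ hWclU
        intro x hx
        rcases huniv x with h1 | h2 | h3
        · exact h1
        · rw [h] at h2; exact absurd h2 (Set.notMem_empty x)
        · exact absurd hx h3
      have hclopen : IsClopen (closure U) := ⟨isClosed_closure, by rw [hWeq]; exact hWopen⟩
      rcases isClopen_iff.mp hclopen with h1 | h1
      · exact (hUne.mono subset_closure).ne_empty h1
      · have h2 : ((R₁+1:ℝ):ℂ) ∈ closure U := by rw [h1]; exact mem_univ _
        have h3 := mem_closedBall_zero_iff.mp (hclR h2)
        rw [Complex.norm_real, Real.norm_eq_abs, abs_of_pos (by linarith)] at h3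
        linarith
    · exact h
  obtain ⟨x₀, hx₀S⟩ := hSne
  have hk0 : 0 ≤ k := by
    rw [← hSk x₀ hx₀S]; exact Complex.normSq_nonneg _
  rcases hk0.lt_or_eq with hkpos | hk0eq
  -- MAIN CASE : k > 0
  · have h1γ : (1:ℝ) - γ^2 ≠ 0 := by
      intro h
      rw [hkdef, h, zero_mul] at hkpos
      exact lt_irrefl 0 hkpos
    set s : ℝ := Real.sqrt k with hsdef
    have hs0 : 0 < s := Real.sqrt_pos.mpr hkpos
    have hs2 : s^2 = k := Real.sq_sqrt hkpos.le
    set A := conicAffine γ s w h1γ hs0.ne' with hAdef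
    have hAcont : Continuous ⇑A := conicAffine_continuous γ s w h1γ hs0.ne'
    have hAsymmcont : Continuous ⇑A.symm := conicAffine_symm_continuous γ s w h1γ hs0.ne'
    set nsq : ℂ → ℝ := fun x =>
      Complex.normSq ((starRingEnd ℂ) x - (γ:ℂ)*x - (starRingEnd ℂ) w) with hnsqdef
    have hnsqc : Continuous nsq := by
      apply Complex.continuous_normSq.comp
      exact (Complex.continuous_conj.sub (continuous_const.mul continuous_id)).sub
        continuous_const
    have himg : ∀ u : ℂ, nsq (A u) = k * Complex.normSq u := by
      intro u
      have hkey := conicAffine_key γ s w h1γ hs0.ne' u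
      rw [← hAdef] at hkey
      simp only [hnsqdef]
      rw [hkey, Complex.normSq_mul, Complex.normSq_ofReal]
      rw [show s * s = k from by rw [← hs2]; ring]
    set E : Set ℂ := ⇑A '' Metric.sphere (0:ℂ) 1 with hEdef
    set I_ : Set ℂ := ⇑A '' Metric.ball (0:ℂ) 1 with hIdef
    set O_ : Set ℂ := ⇑A '' {z : ℂ | 1 < ‖z‖} with hOdef
    have hnsq_symm : ∀ x : ℂ, nsq x = k * Complex.normSq (A.symm x) := by
      intro x
      have := himg (A.symm x)
      rwa [A.apply_symm_apply] at this
    have hnormSq_norm : ∀ u : ℂ, Complex.normSq u = ‖u‖^2 := by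
      intro u
      rw [Complex.sq_norm]
    have hEiff : ∀ x : ℂ, x ∈ E ↔ nsq x = k := by
      intro x
      rw [hEdef, affineEquiv_mem_image, mem_sphere_zero_iff_norm, hnsq_symm, hnormSq_norm]
      constructor
      · intro h; rw [h]; ring
      · intro h
        have h2 : ‖A.symm x‖^2 = 1 := by
          have h3 : k * ‖A.symm x‖^2 = k * 1 := by rw [h, mul_one]
          exact mul_left_cancel₀ (ne_of_gt hkpos) h3
        have h3 : (‖A.symm x‖ - 1) * (‖A.symm x‖ + 1) = 0 := by linear_combination h2
        rcases mul_eq_zero.mp h3 with h4 | h4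
        · linarith
        · nlinarith [norm_nonneg (A.symm x)]
    have hIiff : ∀ x : ℂ, x ∈ I_ ↔ nsq x < k := by
      intro x
      rw [hIdef, affineEquiv_mem_image, mem_ball_zero_iff, hnsq_symm, hnormSq_norm]
      constructor
      · intro h
        have h2 : ‖A.symm x‖^2 < 1 := by nlinarith [norm_nonneg (A.symm x)]
        calc k * ‖A.symm x‖^2 < k * 1 := (mul_lt_mul_iff_right₀ hkpos).mpr h2
          _ = k := mul_one k
      · intro h
        have h2 : k * ‖A.symm x‖^2 < k * 1 := by rwa [mul_one]
        have h3 := (mul_lt_mul_iff_right₀ hkpos).mp h2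
        nlinarith [norm_nonneg (A.symm x)]
    have hOiff : ∀ x : ℂ, x ∈ O_ ↔ k < nsq x := by
      intro x
      rw [hOdef, affineEquiv_mem_image, hnsq_symm, hnormSq_norm]
      show 1 < ‖A.symm x‖ ↔ _
      constructor
      · intro h
        have h2 : 1 < ‖A.symm x‖^2 := by nlinarith [norm_nonneg (A.symm x)]
        calc k = k * 1 := (mul_one k).symm
          _ < k * ‖A.symm x‖^2 := (mul_lt_mul_iff_right₀ hkpos).mpr h2
      · intro h
        have h2 : k * 1 < k * ‖A.symm x‖^2 := by rwa [mul_one]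
        have h3 := (mul_lt_mul_iff_right₀ hkpos).mp h2
        nlinarith [norm_nonneg (A.symm x)]
    have hIopen : IsOpen I_ := by
      have : I_ = {x | nsq x < k} := Set.ext fun x => hIiff x
      rw [this]; exact isOpen_lt hnsqc continuous_const
    have hOopen : IsOpen O_ := by
      have : O_ = {x | k < nsq x} := Set.ext fun x => hOiff x
      rw [this]; exact isOpen_lt continuous_const hnsqc
    have hIconn : IsPreconnected I_ :=
      ((convex_ball (0:ℂ) 1).isPreconnected).image _ hAcont.continuousOn
    have hOconn : IsPreconnected O_ :=
      isPreconnected_one_lt_norm.image _ hAcont.continuousOn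
    have hSE : S ⊆ E := fun x hx => (hEiff x).mpr (hSk x hx)
    -- approximations from inside and outside
    have happrox : ∀ p ∈ E, ∀ r : ℝ, 0 < r →
        (∃ q ∈ I_, dist q p < r) ∧ (∃ q ∈ O_, dist q p < r) := by
      intro p hp r hr
      set u : ℂ := A.symm p with hu
      have hpu : A u = p := A.apply_symm_apply p
      have hnu : Complex.normSq u = 1 := by
        have h1 := (hEiff p).mp hp
        have h2 := hnsq_symm p
        have h3 : k * Complex.normSq u = k * 1 := by
          rw [← h2, h1, mul_one]
        exact mul_left_cancel₀ (ne_of_gt hkpos) h3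
      constructor
      · -- inside
        have htd : Tendsto (fun τ : ℝ => A ((1-τ) • u)) (𝓝[>] 0) (𝓝 p) := by
          rw [← hpu]
          apply (hAcont.tendsto u).comp
          apply tendsto_nhdsWithin_of_tendsto_nhds
          have : Tendsto (fun τ : ℝ => (1-τ) • u) (𝓝 0) (𝓝 ((1-0:ℝ) • u)) := by
            apply Tendsto.smul_const
            exact (tendsto_const_nhds.sub tendsto_id)
          simpa using this
        have hball := Metric.tendsto_nhds.mp htd r hr
        have hsmall : ∀ᶠ τ : ℝ in 𝓝[>] 0, τ < 1/2 :=
          eventually_nhdsWithin_of_eventually_nhds (Iio_mem_nhds (by norm_num))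
        obtain ⟨τ, hτd, hτs, hτpos⟩ :=
          (hball.and (hsmall.and self_mem_nhdsWithin)).exists
        refine ⟨A ((1-τ) • u), ?_, hτd⟩
        rw [hIiff, himg]
        have hτ0 : (0:ℝ) < τ := hτpos
        have hτ1 : τ < 1/2 := hτs
        have : Complex.normSq ((1-τ) • u) = (1-τ)^2 := by
          rw [Complex.real_smul, Complex.normSq_mul, Complex.normSq_ofReal, hnu]
          ring
        rw [this]
        calc k * (1-τ)^2 < k * 1 := by
              apply (mul_lt_mul_iff_right₀ hkpos).mpr
              nlinarith
          _ = k := mul_one k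
      · -- outside
        have htd : Tendsto (fun τ : ℝ => A ((1+τ) • u)) (𝓝[>] 0) (𝓝 p) := by
          rw [← hpu]
          apply (hAcont.tendsto u).comp
          apply tendsto_nhdsWithin_of_tendsto_nhds
          have : Tendsto (fun τ : ℝ => (1+τ) • u) (𝓝 0) (𝓝 ((1+0:ℝ) • u)) := by
            apply Tendsto.smul_const
            exact (tendsto_const_nhds.add tendsto_id)
          simpa using this
        have hball := Metric.tendsto_nhds.mp htd r hr
        obtain ⟨τ, hτd, hτpos⟩ := (hball.and self_mem_nhdsWithin).exists
        refine ⟨A ((1+τ) • u), ?_, hτd⟩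
        rw [hOiff, himg]
        have hτ0 : (0:ℝ) < τ := hτpos
        have : Complex.normSq ((1+τ) • u) = (1+τ)^2 := by
          rw [Complex.real_smul, Complex.normSq_mul, Complex.normSq_ofReal, hnu]
          ring
        rw [this]
        calc k = k * 1 := (mul_one k).symm
          _ < k * (1+τ)^2 := by
              apply (mul_lt_mul_iff_right₀ hkpos).mpr
              nlinarith
    -- O_ is not inside W
    have hOΩ : O_ ⊆ Ω := by
      have hOsub : O_ ⊆ W ∪ Ω := by
        intro x hx
        rcases huniv x with h | h | h
        · exact Or.inl h
        · exfalso
          have := hSk x h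
          have h2 := (hOiff x).mp hx
          simp only [hnsqdef] at h2
          rw [this] at h2
          exact lt_irrefl _ h2
        · exact Or.inr h
      rcases hOconn.subset_or_subset hWopen hΩopen hWΩ hOsub with hOW | hOΩ'
      · exfalso
        have hcomp := (isCompact_closedBall (0:ℂ) R₁).image hAsymmcont
        obtain ⟨C, hC⟩ := hcomp.isBounded.subset_closedBall 0
        set u : ℂ := ((max C 0 + 2 : ℝ) : ℂ) with hudef
        have hunorm : ‖u‖ = max C 0 + 2 := by
          rw [hudef, Complex.norm_real, Real.norm_eq_abs, abs_of_pos]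
          positivity
        have hmem : A u ∈ O_ := by
          rw [hOiff, himg, hnormSq_norm, hunorm]
          have h5 : (0:ℝ) ≤ max C 0 := le_max_right C 0
          have h6 : 1 < (max C 0 + 2)^2 := by nlinarith
          calc k = k * 1 := (mul_one k).symm
            _ < k * (max C 0 + 2)^2 := (mul_lt_mul_iff_right₀ hkpos).mpr h6
        have h2 : A u ∈ closedBall 0 R₁ := hclR (hWclU (hOW hmem))
        have h3 : A.symm (A u) ∈ closedBall 0 C := hC (mem_image_of_mem _ h2)
        rw [A.symm_apply_apply] at h3
        have h4 := mem_closedBall_zero_iff.mp h3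
        rw [hunorm] at h4
        have := le_max_left C 0
        linarith
      · exact hOΩ'
    -- I_ is inside W
    have hIW : I_ ⊆ W := by
      have hIsub : I_ ⊆ W ∪ Ω := by
        intro x hx
        rcases huniv x with h | h | h
        · exact Or.inl h
        · exfalso
          have := hSk x h
          have h2 := (hIiff x).mp hx
          simp only [hnsqdef] at h2
          rw [this] at h2
          exact lt_irrefl _ h2
        · exact Or.inr h
      rcases hIconn.subset_or_subset hWopen hΩopen hWΩ hIsub with hIW' | hIΩ
      · exact hIW'
      · exfalso
        -- then W ⊆ E, contradicting openness of W
        have hWE : W ⊆ E := by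
          intro x hx
          have hxnΩ : x ∉ Ω := Set.disjoint_left.mp hWΩ hx
          have hxnI : x ∉ I_ := fun h => hxnΩ (hIΩ h)
          have hxnO : x ∉ O_ := fun h => hxnΩ (hOΩ h)
          rw [hIiff] at hxnI
          rw [hOiff] at hxnO
          rw [hEiff]
          push_neg at hxnI hxnO
          linarith
        obtain ⟨u₀, hu₀⟩ := hUne
        have hu₀W : u₀ ∈ W := hUW hu₀
        obtain ⟨r, hr0, hball⟩ := Metric.isOpen_iff.mp hWopen u₀ hu₀W
        obtain ⟨⟨q, hqI, hqd⟩, -⟩ := happrox u₀ (hWE hu₀W) r hr0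
        have hqW : q ∈ W := hball (by rwa [mem_ball])
        have hqE : q ∈ E := hWE hqW
        rw [hEiff] at hqE
        rw [hIiff] at hqI
        rw [hqE] at hqI
        exact lt_irrefl _ hqI
    -- E is exactly S
    have hΩE : ∀ x ∈ Ω, x ∉ E := by
      intro x hxΩ hxE
      obtain ⟨r, hr0, hball⟩ := Metric.isOpen_iff.mp hΩopen x hxΩ
      obtain ⟨⟨q, hqI, hqd⟩, -⟩ := happrox x hxE r hr0
      have hqΩ : q ∈ Ω := hball (by rwa [mem_ball])
      exact Set.disjoint_left.mp hWΩ (hIW hqI) hqΩ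
    have hWE' : ∀ x ∈ W, x ∉ E := by
      intro x hxW hxE
      obtain ⟨r, hr0, hball⟩ := Metric.isOpen_iff.mp hWopen x hxW
      obtain ⟨-, ⟨q, hqO, hqd⟩⟩ := happrox x hxE r hr0
      have hqW : q ∈ W := hball (by rwa [mem_ball])
      exact Set.disjoint_left.mp hWΩ hqW (hOΩ hqO)
    have hES : E ⊆ S := by
      intro x hx
      rcases huniv x with h | h | h
      · exact absurd hx (hWE' x h)
      · exact h
      · exact absurd hx (hΩE x h)
    have hEΓ : E ⊆ frontier U := hES.trans hSΓ
    -- finally : Γ ⊆ E via the circle argument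
    obtain ⟨e⟩ := hhomeo
    have hΓE : frontier U ⊆ E := by
      intro x₀' hx₀'
      by_contra hxE
      have hpf : ∀ u : Metric.sphere (0:ℂ) 1, A ↑u ∈ frontier U := by
        intro u
        apply hEΓ
        rw [hEdef]
        exact mem_image_of_mem _ u.2
      set q₀ : Metric.sphere (0:ℂ) 1 := e ⟨x₀', hx₀'⟩ with hq₀def
      have hq₀abs : ‖(↑q₀ : ℂ)‖ = 1 := by
        exact mem_sphere_zero_iff_norm.mp q₀.2
      set ψ : Metric.sphere (0:ℂ) 1 → ℂ := fun u => (↑(e ⟨A ↑u, hpf u⟩) : ℂ) with hψdef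
      have hψcont : Continuous ψ := by
        apply continuous_subtype_val.comp
        apply e.continuous.comp
        exact Continuous.subtype_mk (hAcont.comp continuous_subtype_val) _
      have hψabs : ∀ u, ‖ψ u‖ = 1 := by
        intro u
        exact mem_sphere_zero_iff_norm.mp (e ⟨A ↑u, hpf u⟩).2
      have hψne : ∀ u, ψ u ≠ (↑q₀ : ℂ) := by
        intro u h
        have h1 : e ⟨A ↑u, hpf u⟩ = q₀ := Subtype.coe_injective h
        have h2 : (⟨A ↑u, hpf u⟩ : frontier U) = ⟨x₀', hx₀'⟩ := e.injective (by rw [h1, hq₀def])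
        have h3 : A ↑u = x₀' := congrArg Subtype.val h2
        apply hxE
        rw [← h3, hEdef]
        exact mem_image_of_mem _ u.2
      set msph : Metric.sphere (0:ℂ) 1 → ℝ :=
        fun u => Complex.arg (-(ψ u * (starRingEnd ℂ) (↑q₀ : ℂ))) with hmsphdef
      have hslit : ∀ u, (-(ψ u * (starRingEnd ℂ) (↑q₀ : ℂ))) ∈ Complex.slitPlane :=
        fun u => neg_mul_conj_slit (hψabs u) hq₀abs (hψne u)
      have hmsphcont : Continuous msph := by
        rw [continuous_iff_continuousAt]
        intro u
        have hbase : ContinuousAt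
            (fun u : Metric.sphere (0:ℂ) 1 => -(ψ u * (starRingEnd ℂ) (↑q₀ : ℂ))) u :=
          ((hψcont.mul continuous_const).neg).continuousAt
        simp only [hmsphdef]
        exact ContinuousAt.comp
          (g := Complex.arg)
          (f := fun u : Metric.sphere (0:ℂ) 1 => -(ψ u * (starRingEnd ℂ) (↑q₀ : ℂ)))
          (Complex.continuousAt_arg (hslit u)) hbase
      have hmsphinj : Function.Injective msph := by
        intro a b hab
        have habs : ∀ u, ‖-(ψ u * (starRingEnd ℂ) (↑q₀ : ℂ))‖ = 1 := by
          intro u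
          rw [norm_neg, norm_mul, Complex.norm_conj, hψabs u, hq₀abs, one_mul]
        have h1 : -(ψ a * (starRingEnd ℂ) (↑q₀:ℂ)) = -(ψ b * (starRingEnd ℂ) (↑q₀:ℂ)) :=
          arg_inj_unit (habs a) (habs b) hab
        have hq₀ne : (starRingEnd ℂ) (↑q₀:ℂ) ≠ 0 := by
          intro h
          have := congrArg norm h
          rw [Complex.norm_conj, hq₀abs] at this
          simpa using this
        have h2 : ψ a = ψ b := by
          have := neg_injective h1
          exact mul_right_cancel₀ hq₀ne this
        have h3 : e ⟨A ↑a, hpf a⟩ = e ⟨A ↑b, hpf b⟩ := Subtype.coe_injective h2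
        have h4 := e.injective h3
        have h5 : A ↑a = A ↑b := congrArg Subtype.val h4
        have h6 : (↑a : ℂ) = ↑b := A.injective h5
        exact Subtype.coe_injective h6
      -- package as a map on the set
      set φfun : ℂ → ℝ := fun z =>
        if h : z ∈ Metric.sphere (0:ℂ) 1 then msph ⟨z, h⟩ else 0 with hφfundef
      have hres : (Metric.sphere (0:ℂ) 1).restrict φfun = msph := by
        funext u
        show φfun u = msph u
        simp only [hφfundef, dif_pos u.2]
      apply EinsteinAux.no_circle_injOn φfun
      · rw [continuousOn_iff_continuous_restrict,
          show (Metric.sphere (0:ℂ) 1).domRestrict φfun = msph from hres]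
        exact hmsphcont
      · intro a ha b hb hab
        have ha' : φfun a = msph ⟨a, ha⟩ := by simp only [hφfundef, dif_pos ha]
        have hb' : φfun b = msph ⟨b, hb⟩ := by simp only [hφfundef, dif_pos hb]
        rw [ha', hb'] at hab
        have := hmsphinj hab
        exact congrArg Subtype.val this
    exact ⟨A, subset_antisymm hΓE hEΓ⟩
  -- DEGENERATE CASE : k = 0
  · exfalso
    have hL0 : ∀ x ∈ S, (starRingEnd ℂ) x - (γ:ℂ)*x = (starRingEnd ℂ) w := by
      intro x hx
      have := hSk x hx
      rw [← hk0eq] at this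
      have h2 := Complex.normSq_eq_zero.mp this
      linear_combination h2
    by_cases h1γ : (1:ℝ) - γ^2 = 0
    -- γ = ±1 : S lies on a line
    · have hsq : γ = 1 ∨ γ = -1 := by
        have h2 : (1 - γ) * (1 + γ) = 0 := by linear_combination h1γ
        rcases mul_eq_zero.mp h2 with h | h
        · left; linarith
        · right; linarith
      obtain ⟨φ, v, d, hφv, hφd, hvnorm, hdnorm, t, hSt⟩ :
          ∃ (φ : ℂ →ₗ[ℝ] ℝ) (v d : ℂ), φ v = 1 ∧ φ d = 0 ∧ ‖v‖ = 1 ∧ ‖d‖ = 1 ∧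
            ∃ t : ℝ, ∀ x ∈ S, φ x = t := by
        rcases hsq with h1 | h1
        · refine ⟨Complex.imLm, Complex.I, 1, by simp [Complex.imLm_coe],
            by simp [Complex.imLm_coe], by simp, by simp, w.im/2, ?_⟩
          intro x hx
          have h := hL0 x hx
          rw [h1] at h
          have him := congrArg Complex.im h
          simp only [Complex.sub_im, Complex.conj_im, Complex.mul_im, Complex.ofReal_re,
            Complex.ofReal_im, Complex.one_re, Complex.one_im] at him
          show x.im = w.im / 2
          push_cast at him
          linarith
        · refine ⟨Complex.reLm, 1, Complex.I, by simp [Complex.reLm_coe],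
            by simp [Complex.reLm_coe], by simp, by simp, w.re/2, ?_⟩
          intro x hx
          have h := hL0 x hx
          rw [h1] at h
          have hre := congrArg Complex.re h
          simp only [Complex.sub_re, Complex.conj_re, Complex.mul_re, Complex.ofReal_re,
            Complex.ofReal_im, Complex.one_re, Complex.one_im] at hre
          show x.re = w.re / 2
          push_cast at hre
          linarith
      have hφc : Continuous φ := φ.continuous_of_finiteDimensional
      set P : Set ℂ := {x | t < φ x} with hPdef
      set Q : Set ℂ := {x | φ x < t} with hQdef
      have hPopen : IsOpen P := isOpen_lt continuous_const hφc
      have hQopen : IsOpen Q := isOpen_lt hφc continuous_const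
      have hPconn : IsPreconnected P := (convex_halfSpace_gt (LinearMap.isLinear φ) t).isPreconnected
      have hQconn : IsPreconnected Q := (convex_halfSpace_lt (LinearMap.isLinear φ) t).isPreconnected
      -- both half planes contain points of arbitrarily large norm
      have hbig : ∀ (c : ℝ), ∀ r : ℝ, ∃ x : ℂ, φ x = c ∧ r < ‖x‖ := by
        intro c r
        refine ⟨c • v + (|r| + ‖c • v‖ + 1) • d, ?_, ?_⟩
        · simp only [map_add, _root_.map_smul, hφv, hφd, smul_eq_mul]
          ring
        · have h1 : ‖(|r| + ‖c • v‖ + 1) • d‖ = |r| + ‖c • v‖ + 1 := by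
            rw [norm_smul, hdnorm, mul_one, Real.norm_eq_abs, abs_of_pos (by positivity)]
          have h2 : ‖(|r| + ‖c • v‖ + 1) • d‖
              ≤ ‖c • v + (|r| + ‖c • v‖ + 1) • d‖ + ‖c • v‖ := by
            have h3 := norm_add_le (c • v + (|r| + ‖c • v‖ + 1) • d) (-(c • v))
            simpa using h3
          have h4 := le_abs_self r
          linarith
      have hPsub : P ⊆ W ∪ Ω := by
        intro x hx
        rcases huniv x with h | h | h
        · exact Or.inl h
        · exfalso
          have hx' : t < φ x := hx
          rw [hSt x h] at hx'
          exact lt_irrefl _ hx'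
        · exact Or.inr h
      have hQsub : Q ⊆ W ∪ Ω := by
        intro x hx
        rcases huniv x with h | h | h
        · exact Or.inl h
        · exfalso
          have hx' : φ x < t := hx
          rw [hSt x h] at hx'
          exact lt_irrefl _ hx'
        · exact Or.inr h
      have hPΩ : P ⊆ Ω := by
        rcases hPconn.subset_or_subset hWopen hΩopen hWΩ hPsub with hPW | h
        · exfalso
          obtain ⟨x, hφx, hx⟩ := hbig (t+1) R₁
          have hxP : x ∈ P := by rw [hPdef]; show t < φ x; rw [hφx]; linarith
          exact absurd (mem_closedBall_zero_iff.mp (hclR (hWclU (hPW hxP)))) (not_le.mpr hx)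
        · exact h
      have hQΩ : Q ⊆ Ω := by
        rcases hQconn.subset_or_subset hWopen hΩopen hWΩ hQsub with hQW | h
        · exfalso
          obtain ⟨x, hφx, hx⟩ := hbig (t-1) R₁
          have hxQ : x ∈ Q := by rw [hQdef]; show φ x < t; rw [hφx]; linarith
          exact absurd (mem_closedBall_zero_iff.mp (hclR (hWclU (hQW hxQ)))) (not_le.mpr hx)
        · exact h
      have hWt : ∀ x ∈ W, φ x = t := by
        intro x hx
        have hxnΩ : x ∉ Ω := Set.disjoint_left.mp hWΩ hx
        rcases lt_trichotomy (φ x) t with h | h | h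
        · exact absurd (hQΩ h) hxnΩ
        · exact h
        · exact absurd (hPΩ h) hxnΩ
      obtain ⟨u₀, hu₀⟩ := hUne
      have hu₀W : u₀ ∈ W := hUW hu₀
      obtain ⟨r, hr0, hball⟩ := Metric.isOpen_iff.mp hWopen u₀ hu₀W
      have hin : u₀ + (r/2) • v ∈ W := by
        apply hball
        rw [mem_ball, dist_eq_norm]
        simp only [add_sub_cancel_left]
        rw [norm_smul, hvnorm, mul_one, Real.norm_eq_abs, abs_of_pos (by linarith)]
        linarith
      have h1 := hWt u₀ hu₀W
      have h2 := hWt _ hin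
      rw [map_add, _root_.map_smul, hφv, h1, smul_eq_mul, mul_one] at h2
      linarith
    -- 1 - γ² ≠ 0 : S is a single point
    · have hγ2' : (1:ℂ) - (γ:ℂ)^2 ≠ 0 := by
        have : ((1 - γ^2 : ℝ):ℂ) ≠ 0 := Complex.ofReal_ne_zero.mpr h1γ
        convert this using 1; push_cast; ring
      have hLinj : ∀ x y : ℂ,
          (starRingEnd ℂ) x - (γ:ℂ)*x = (starRingEnd ℂ) y - (γ:ℂ)*y → x = y := by
        intro x y hxy
        have h2 := congrArg (starRingEnd ℂ) hxy
        simp only [map_sub, map_mul, Complex.conj_ofReal, Complex.conj_conj] at h2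
        have h3 : ((1:ℂ)-(γ:ℂ)^2) * x = ((1:ℂ)-(γ:ℂ)^2)*y := by
          linear_combination h2 + (γ:ℂ) * hxy
        exact mul_left_cancel₀ hγ2' h3
      have hSsingle : ∀ x ∈ S, x = x₀ := by
        intro x hx
        exact hLinj x x₀ ((hL0 x hx).trans (hL0 x₀ hx₀S).symm)
      have hcompl : IsPreconnected ({x₀}ᶜ : Set ℂ) :=
        (isPathConnected_compl_singleton_of_one_lt_rank
          (by rw [Complex.rank_real_complex]; norm_num) x₀).isConnected.isPreconnected
      have hsub : ({x₀}ᶜ : Set ℂ) ⊆ W ∪ Ω := by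
        intro x hx
        rcases huniv x with h | h | h
        · exact Or.inl h
        · exact absurd (hSsingle x h) hx
        · exact Or.inr h
      rcases hcompl.subset_or_subset hWopen hΩopen hWΩ hsub with hCW | hCΩ
      · set y : ℂ := x₀ + ((R₁ + ‖x₀‖ + 1 : ℝ):ℂ) with hydef
        have hcnorm : ‖((R₁ + ‖x₀‖ + 1 : ℝ):ℂ)‖ = R₁ + ‖x₀‖ + 1 := by
          rw [Complex.norm_real, Real.norm_eq_abs, abs_of_pos]
          positivity
        have hy : y ≠ x₀ := by
          intro h
          have : ((R₁ + ‖x₀‖ + 1 : ℝ):ℂ) = 0 := by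
            have := congrArg (fun z => z - x₀) h
            simpa [hydef] using this
          have h2 := congrArg norm this
          rw [hcnorm, norm_zero] at h2
          have := norm_nonneg x₀
          linarith
        have hyW : y ∈ W := hCW (by simpa using hy)
        have h1 : ‖y‖ ≤ R₁ := mem_closedBall_zero_iff.mp (hclR (hWclU hyW))
        have h2 : ‖((R₁ + ‖x₀‖ + 1 : ℝ):ℂ)‖ ≤ ‖y‖ + ‖x₀‖ := by
          have h3 := norm_add_le y (-x₀)
          simpa [hydef] using h3
        rw [hcnorm] at h2
        linarith
      · have hWs : W ⊆ {x₀} := by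
          intro x hx
          by_contra h
          exact Set.disjoint_left.mp hWΩ hx (hCΩ h)
        obtain ⟨u₀, hu₀⟩ := hUne
        have hu₀W : u₀ ∈ W := hUW hu₀
        obtain ⟨r, hr0, hball⟩ := Metric.isOpen_iff.mp hWopen u₀ hu₀W
        have hin : u₀ + ((r/2 : ℝ):ℂ) ∈ W := by
          apply hball
          rw [mem_ball, dist_eq_norm]
          simp only [add_sub_cancel_left]
          rw [Complex.norm_real, Real.norm_eq_abs, abs_of_pos (by linarith)]
          linarith
        have e1 : u₀ = x₀ := hWs hu₀W
        have e2 : u₀ + ((r/2 : ℝ):ℂ) = x₀ := hWs hin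
        rw [e1] at e2
        have : ((r/2 : ℝ):ℂ) = 0 := by
          have := congrArg (fun z => z - x₀) e2
          simpa using this
        rw [Complex.ofReal_eq_zero] at this
        linarith
end
end

section
/- (Chang–Refsdal lens.) Let c > 0 and γ be real numbers and w ∈ ℂ. Consider the set S = { z ∈ ℂ : z ≠ 0 and z − c/conj(z) − γ conj(z) = w }. If S is finite, then S has at most 4 elements. -/
open Complex Polynomial

/-- The Chang–Refsdal lens equation `z - c/conj z - γ conj z = w` has at most 4
solutions, whenever its solution set is finite. -/
theorem chang_refsdal_at_most_four_images
    (c γ : ℝ) (hc : 0 < c) (w : ℂ)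
    (S : Set ℂ)
    (hS : S = {z : ℂ | z ≠ 0 ∧
      z - (c : ℂ) / starRingEnd ℂ z - (γ : ℂ) * starRingEnd ℂ z = w})
    (hfin : S.Finite) :
    S.ncard ≤ 4 := by
  have hcc : (c : ℂ) ≠ 0 := by exact_mod_cast hc.ne'
  by_cases hdeg : (γ : ℂ) = 0 ∧ w = 0
  · -- degenerate: S is infinite, contradiction
    obtain ⟨hγ, hw⟩ := hdeg
    exfalso
    set f : ℝ → ℂ := fun t => (Real.sqrt c : ℂ) * Complex.exp (t * I) with hf
    have hsqrt : (Real.sqrt c : ℂ) ≠ 0 := by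
      exact_mod_cast (Real.sqrt_pos.mpr hc).ne'
    have hinj : Set.InjOn f (Set.Ioo (0:ℝ) 1) := by
      intro t1 ht1 t2 ht2 h
      have h2 : Complex.exp (t1 * I) = Complex.exp (t2 * I) :=
        mul_left_cancel₀ hsqrt h
      rw [Complex.exp_eq_exp_iff_exists_int] at h2
      obtain ⟨n, hn⟩ := h2
      have hI : (t1 : ℂ) = t2 + n * (2 * Real.pi) := by
        have := hn
        have h3 : (t1 : ℂ) * I = ((t2 : ℂ) + n * (2 * Real.pi)) * I := by
          rw [this]; push_cast; ring
        exact mul_right_cancel₀ I_ne_zero h3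
      have hR : t1 = t2 + n * (2 * Real.pi) := by exact_mod_cast hI
      have hn0 : n = 0 := by
        by_contra h0
        have h1 : (1:ℝ) ≤ |(n:ℝ)| := by exact_mod_cast Int.one_le_abs h0
        have hpi := Real.pi_gt_three
        rcases abs_cases (n:ℝ) with ⟨ha, _⟩ | ⟨ha, _⟩ <;> nlinarith [ht1.1, ht1.2, ht2.1, ht2.2]
      rw [hn0] at hR; push_cast at hR; linarith
    have hmem : f '' Set.Ioo (0:ℝ) 1 ⊆ S := by
      rintro z ⟨t, _, rfl⟩
      rw [hS]
      have hz0 : f t ≠ 0 := mul_ne_zero hsqrt (Complex.exp_ne_zero _)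
      refine ⟨hz0, ?_⟩
      have hconj0 : starRingEnd ℂ (f t) ≠ 0 := by simpa using hz0
      have hprod : f t * starRingEnd ℂ (f t) = (c : ℂ) := by
        simp only [hf, map_mul, ← Complex.exp_conj, Complex.conj_ofReal, map_mul, Complex.conj_I]
        have he : Complex.exp ((t:ℂ)*I) * Complex.exp (((t:ℂ)) * -I) = 1 := by
          rw [← Complex.exp_add, show ((t:ℂ)*I + (t:ℂ) * -I) = 0 by ring, Complex.exp_zero]
        have hs : ((Real.sqrt c : ℝ) : ℂ) * ((Real.sqrt c : ℝ) : ℂ) = (c:ℂ) := by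
          rw [← Complex.ofReal_mul, Real.mul_self_sqrt hc.le]
        linear_combination (((Real.sqrt c : ℝ) : ℂ) * ((Real.sqrt c : ℝ) : ℂ)) * he + hs
      rw [hγ, hw, zero_mul, sub_zero, sub_eq_zero, eq_comm, div_eq_iff hconj0, ← hprod]
    exact hfin.not_infinite
      (((Set.Ioo_infinite (by norm_num)).image hinj).mono hmem)
  · -- polynomial case
    push_neg at hdeg
    set wb : ℂ := starRingEnd ℂ w with hwb
    set p : Polynomial ℂ :=
      C ((γ:ℂ) - (γ:ℂ)^3) * X^4 + C (wb - 2*(γ:ℂ)^2*wb - (γ:ℂ)*w) * X^3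
        + C (-(w*wb) - (γ:ℂ)*wb^2 - 2*(γ:ℂ)^2*(c:ℂ)) * X^2
        + C (-((c:ℂ)*(w + 2*(γ:ℂ)*wb))) * X + C (-((γ:ℂ)*(c:ℂ)^2)) with hp
    have hp0 : p ≠ 0 := by
      intro h
      by_cases hγ : (γ:ℂ) = 0
      · have hw : w ≠ 0 := hdeg hγ
        have h1 := congrArg (fun q => Polynomial.coeff q 1) h
        simp only [hp, coeff_add, coeff_C_mul, coeff_X_pow, coeff_X, coeff_C, hγ] at h1
        norm_num at h1
        exact hw (by tauto)
      · have h0 := congrArg (fun q => Polynomial.coeff q 0) h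
        simp only [hp, coeff_add, coeff_C_mul, coeff_X_pow, coeff_X, coeff_C] at h0
        norm_num at h0
        rcases h0 with h0 | h0
        · exact hγ (by exact_mod_cast h0)
        · exact hc.ne' h0
    have hdeg4 : p.natDegree ≤ 4 := by
      rw [hp]; compute_degree
    have hsub : S ⊆ ↑p.roots.toFinset := by
      intro z hz
      rw [hS] at hz
      obtain ⟨hz0, heq⟩ := hz
      have hzb : starRingEnd ℂ z ≠ 0 := by simpa using hz0
      set u : ℂ := starRingEnd ℂ z with hu
      have hE1 : z*u - (c:ℂ) - (γ:ℂ)*u^2 - w*u = 0 := by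
        field_simp at heq
        linear_combination heq
      have heqc : u - (c:ℂ) / z - (γ:ℂ) * z = wb := by
        have h := congrArg (starRingEnd ℂ) heq
        simp only [hu, map_sub, map_mul, map_div₀, Complex.conj_conj, Complex.conj_ofReal,
          ← hwb] at h
        rw [hu]
        exact h
      have hE2 : u*z - (c:ℂ) - (γ:ℂ)*z^2 - wb*z = 0 := by
        field_simp at heqc
        linear_combination heqc
      have hroot : p.IsRoot z := by
        simp only [hp, IsRoot, eval_add, eval_mul, eval_pow, eval_C, eval_X]
        linear_combination z^2 * hE1
          - (z^2 - (γ:ℂ)*(((γ:ℂ)*z^2 + wb*z + (c:ℂ)) + z*u) - w*z) * hE2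
      simp only [Finset.mem_coe, Multiset.mem_toFinset, mem_roots hp0]
      exact hroot
    calc S.ncard ≤ (p.roots.toFinset : Set ℂ).ncard :=
          Set.ncard_le_ncard hsub (p.roots.toFinset.finite_toSet)
      _ = p.roots.toFinset.card := by simp [Set.ncard_coe_finset]
      _ ≤ Multiset.card p.roots := Multiset.toFinset_card_le _
      _ ≤ p.natDegree := Polynomial.card_roots' p
      _ ≤ 4 := hdeg4
end

section
/- Let c be a real number and let w ∈ ℂ with w ≠ 0. Then the set { z ∈ ℂ : 0 < |z| < 1 and conj(z) − (c/z)·|z| = conj(w) } has at most 2 elements. -/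
open Complex

/-- For the isothermal density on the unit disk, the shear-free lens equation inside
the disk, `conj z - (c/z)|z| = conj w`, has at most two solutions with `0 < |z| < 1`. -/
theorem isothermal_disk_at_most_two_dim_images
    (c : ℝ) (w : ℂ) (hw : w ≠ 0) :
    ∃ u v : ℂ, {z : ℂ | 0 < ‖z‖ ∧ ‖z‖ < 1 ∧
      starRingEnd ℂ z - ((c : ℂ) / z) * (‖z‖ : ℂ) = starRingEnd ℂ w}
      ⊆ {u, v} := by
  set a : ℝ := ‖w‖ with ha
  have hw' : starRingEnd ℂ w ≠ 0 := by simpa using hw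
  refine ⟨(((c + a) * a : ℝ) : ℂ) / (starRingEnd ℂ w),
          (((c - a) * (-a) : ℝ) : ℂ) / (starRingEnd ℂ w), ?_⟩
  rintro z ⟨hz0, hz1, heq⟩
  have hz : z ≠ 0 := by
    intro h; rw [h] at hz0; simp at hz0
  have hzc : z * starRingEnd ℂ z = (‖z‖ : ℂ) ^ 2 := Complex.mul_conj' z
  have h1 : (‖z‖ : ℂ) * ((‖z‖ : ℂ) - c) = z * starRingEnd ℂ w := by
    have h := congrArg (fun t => z * t) heq
    field_simp at h
    linear_combination h - hzc
  have habs : ‖z‖ * |‖z‖ - c| = ‖z‖ * a := by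
    have := congrArg (‖·‖) h1
    simpa [norm_mul, Complex.norm_real, abs_of_pos hz0, Complex.sq_norm,
      ← Complex.ofReal_sub, mul_comm] using this
  have h2 : |‖z‖ - c| = a := by
    exact mul_left_cancel₀ hz0.ne' habs
  have hz2 : z = ((‖z‖ : ℂ) * ((‖z‖ : ℂ) - c)) / starRingEnd ℂ w := by
    field_simp
    linear_combination -h1
  rcases abs_eq (by positivity : (0:ℝ) ≤ a) |>.mp h2 with h3 | h3
  · left
    rw [hz2]
    have hr : ‖z‖ = c + a := by linarith
    rw [hr]
    push_cast
    ring_nf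
  · right
    rw [hz2]
    have hr : ‖z‖ = c - a := by linarith
    rw [hr]
    push_cast
    ring_nf
    rfl
end
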